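/- arXiv:2605.30645 — 5 statements merged into one kernel-verified Lean document; each statement's English description precedes it below -/
import Mathlib

section
/- Let ν > -1/2 and let f ∈ C²((0, ∞)) be such that f and f' extend continuously to 0 and f, f', Δ_ν f ∈ L¹((0, ∞), x^{2ν+1} dx). Then 𝓕_ν(Δ_ν f)(y) = -y² · 𝓕_ν f(y) for every y > 0. -/
open MeasureTheory Filter Set
open scoped Topology

/-- Bessel function of the first kind of order `ν`, via its power series (for `x > 0`). -/
noncomputable def besselJ (ν : ℝ) (x : ℝ) : ℝ :=
  ∑' n : ℕ, ((-1 : ℝ) ^ n / ((n.factorial : ℝ) * Real.Gamma ((n : ℝ) + ν + 1))) *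
    (x / 2) ^ (2 * (n : ℝ) + ν)

/-- The Fourier–Bessel kernel `φ_ν(x) = x^{-ν} J_ν(x)` for `x > 0`,
extended by `φ_ν(0) = 1/(2^ν Γ(ν+1))`. -/
noncomputable def fbKernel (ν : ℝ) (x : ℝ) : ℝ :=
  if x = 0 then 1 / ((2 : ℝ) ^ ν * Real.Gamma (ν + 1)) else x ^ (-ν) * besselJ ν x

/-- The weighted measure `x^{2ν+1} dx` on `(0, ∞)`. -/
noncomputable def wMeasure (ν : ℝ) : Measure ℝ :=
  (volume.restrict (Ioi (0 : ℝ))).withDensity fun x => ENNReal.ofReal (x ^ (2 * ν + 1))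

/-- The Fourier–Bessel transform of order `ν`. -/
noncomputable def fbTransform (ν : ℝ) (f : ℝ → ℂ) (y : ℝ) : ℂ :=
  ∫ x in Ioi (0 : ℝ), (fbKernel ν (x * y) * x ^ (2 * ν + 1)) • f x

namespace FBaux

/-- The Poisson-representation weight. -/
noncomputable def q (ν t : ℝ) : ℝ := (1 - t ^ 2) ^ (ν - 1/2)

variable {ν : ℝ}

lemma q_nonneg {t : ℝ} (ht : t ∈ Ioo (-1:ℝ) 1) : 0 ≤ q ν t :=
  Real.rpow_nonneg (by nlinarith [ht.1, ht.2]) _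

lemma q_contOn : ContinuousOn (q ν) (Ioo (-1:ℝ) 1) := by
  intro t ht
  have h1 : (0:ℝ) < 1 - t ^ 2 := by nlinarith [ht.1, ht.2]
  exact (((continuous_const.sub (continuous_pow 2)).continuousAt).rpow_const
    (Or.inl h1.ne')).continuousWithinAt

lemma q_integrableOn (hν : ν > -(1/2)) : IntegrableOn (q ν) (Ioo (-1:ℝ) 1) := by
  have he : (-1:ℝ) < ν - 1/2 := by linarith
  set e := ν - 1/2 with hedef
  set C : ℝ := max 1 ((2:ℝ) ^ e) with hC
  have hC1 : (1:ℝ) ≤ C := le_max_left _ _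
  have hC2 : (2:ℝ) ^ e ≤ C := le_max_right _ _
  have hfac : ∀ u ∈ Icc (1:ℝ) 2, u ^ e ≤ C := by
    intro u hu
    rcases le_or_gt 0 e with h0 | h0
    · exact le_trans (Real.rpow_le_rpow (by linarith [hu.1]) hu.2 h0) hC2
    · exact le_trans (Real.rpow_le_one_of_one_le_of_nonpos hu.1 h0.le) hC1
  -- integrability of (1-t)^e on Ioo 0 1
  have hA : IntegrableOn (fun t : ℝ => (1 - t) ^ e) (Ioo (0:ℝ) 1) := by
    have h1 : IntervalIntegrable (fun x : ℝ => x ^ e) volume 0 1 :=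
      intervalIntegral.intervalIntegrable_rpow' he
    have h2 := (h1.comp_sub_left 1)
    -- IntervalIntegrable (fun x => (1 - x) ^ e) volume (1-0) (1-1)
    have h3 : IntervalIntegrable (fun x : ℝ => (1 - x) ^ e) volume 0 1 := by
      simpa using h2.symm
    exact ((intervalIntegrable_iff_integrableOn_Ioc_of_le (by norm_num)).1 h3).mono_set
      Ioo_subset_Ioc_self
  -- integrability of (1+t)^e on Ioo (-1) 0
  have hB : IntegrableOn (fun t : ℝ => (1 + t) ^ e) (Ioo (-1:ℝ) 0) := by
    have h1 : IntervalIntegrable (fun x : ℝ => x ^ e) volume 0 1 :=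
      intervalIntegral.intervalIntegrable_rpow' he
    have h2 := (h1.comp_add_left 1)
    -- IntervalIntegrable (fun x => (1 + x) ^ e) volume (0-1) (1-1)
    have h3 : IntervalIntegrable (fun x : ℝ => (1 + x) ^ e) volume (-1) 0 := by
      simpa using h2
    exact ((intervalIntegrable_iff_integrableOn_Ioc_of_le (by norm_num)).1 h3).mono_set
      Ioo_subset_Ioc_self
  have key : ∀ t ∈ Ioo (-1:ℝ) 1, q ν t = (1 - t) ^ e * (1 + t) ^ e := by
    intro t ht
    have h1 : (0:ℝ) ≤ 1 - t := by linarith [ht.2]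
    have h2 : (0:ℝ) ≤ 1 + t := by linarith [ht.1]
    rw [q, ← Real.mul_rpow h1 h2]
    rw [hedef]; ring_nf
  have hione : IntegrableOn (q ν) (Ioo (0:ℝ) 1) := by
    refine Integrable.mono' (hA.const_mul C) ((q_contOn.mono ?_).aestronglyMeasurable
      measurableSet_Ioo) (((ae_restrict_mem measurableSet_Ioo).mono ?_))
    · intro t ht; exact ⟨by linarith [ht.1], ht.2⟩
    · intro t ht
      have ht' : t ∈ Ioo (-1:ℝ) 1 := ⟨by linarith [ht.1], ht.2⟩
      rw [Real.norm_eq_abs, abs_of_nonneg (q_nonneg ht'), key t ht']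
      have h1 : (0:ℝ) ≤ (1 - t) ^ e := Real.rpow_nonneg (by linarith [ht.2]) _
      have h2 : (1 + t) ^ e ≤ C := hfac _ ⟨by linarith [ht.1], by linarith [ht.2]⟩
      calc (1 - t) ^ e * (1 + t) ^ e ≤ (1 - t) ^ e * C := by
            exact mul_le_mul_of_nonneg_left h2 h1
        _ = C * (1 - t) ^ e := by ring
  have hitwo : IntegrableOn (q ν) (Ioo (-1:ℝ) 0) := by
    refine Integrable.mono' (hB.const_mul C) ((q_contOn.mono ?_).aestronglyMeasurable
      measurableSet_Ioo) (((ae_restrict_mem measurableSet_Ioo).mono ?_))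
    · intro t ht; exact ⟨ht.1, by linarith [ht.2]⟩
    · intro t ht
      have ht' : t ∈ Ioo (-1:ℝ) 1 := ⟨ht.1, by linarith [ht.2]⟩
      rw [Real.norm_eq_abs, abs_of_nonneg (q_nonneg ht'), key t ht']
      have h1 : (0:ℝ) ≤ (1 + t) ^ e := Real.rpow_nonneg (by linarith [ht.1]) _
      have h2 : (1 - t) ^ e ≤ C := hfac _ ⟨by linarith [ht.2], by linarith [ht.1]⟩
      exact mul_le_mul_of_nonneg_right h2 h1
  -- combine
  have hico : IntegrableOn (q ν) (Ico (0:ℝ) 1) := by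
    rw [integrableOn_Ico_iff_integrableOn_Ioo]; exact hione
  have := hitwo.union hico
  rwa [Set.Ioo_union_Ico_eq_Ioo (by norm_num : (-1:ℝ) < 0) (by norm_num : (0:ℝ) ≤ 1)] at this

lemma int_dom (hν : ν > -(1/2)) {g : ℝ → ℝ} {C : ℝ}
    (hg : ContinuousOn g (Ioo (-1:ℝ) 1))
    (hb : ∀ t ∈ Ioo (-1:ℝ) 1, |g t| ≤ C * q ν t) :
    IntegrableOn g (Ioo (-1:ℝ) 1) :=
  Integrable.mono' ((q_integrableOn hν).const_mul C)
    (hg.aestronglyMeasurable measurableSet_Ioo)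
    ((ae_restrict_mem measurableSet_Ioo).mono fun t ht => by
      simpa [Real.norm_eq_abs] using hb t ht)

noncomputable def Bc (ν : ℝ) : ℝ := ∫ t in Ioo (-1:ℝ) 1, q ν t

noncomputable def P (ν x : ℝ) : ℝ := ∫ t in Ioo (-1:ℝ) 1, q ν t * Real.cos (x * t)

noncomputable def P1 (ν x : ℝ) : ℝ := ∫ t in Ioo (-1:ℝ) 1, (-(q ν t * t)) * Real.sin (x * t)

noncomputable def P2 (ν x : ℝ) : ℝ := ∫ t in Ioo (-1:ℝ) 1, (-(q ν t * t ^ 2)) * Real.cos (x * t)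

lemma abs_t_le {t : ℝ} (ht : t ∈ Ioo (-1:ℝ) 1) : |t| ≤ 1 :=
  abs_le.2 ⟨ht.1.le, ht.2.le⟩

lemma mul_abs_le1 {a c : ℝ} (ha : 0 ≤ a) (hc : |c| ≤ 1) : a * |c| ≤ a := by
  nlinarith [abs_nonneg c]

lemma mul_abs_le2 {a b c : ℝ} (ha : 0 ≤ a) (hb : |b| ≤ 1) (hc : |c| ≤ 1) :
    a * |b| * |c| ≤ a := by
  nlinarith [abs_nonneg b, abs_nonneg c, mul_nonneg ha (abs_nonneg b),
    mul_nonneg (mul_nonneg ha (abs_nonneg b)) (sub_nonneg.2 hc),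
    mul_nonneg ha (sub_nonneg.2 hb)]

lemma Pint (hν : ν > -(1/2)) (x : ℝ) :
    IntegrableOn (fun t => q ν t * Real.cos (x * t)) (Ioo (-1:ℝ) 1) := by
  refine int_dom (C := 1) hν (q_contOn.mul (Real.continuous_cos.comp
    (continuous_const.mul continuous_id)).continuousOn) (fun t ht => ?_)
  rw [abs_mul, abs_of_nonneg (q_nonneg ht), one_mul]
  exact mul_abs_le1 (q_nonneg ht) (Real.abs_cos_le_one _)

lemma P1int (hν : ν > -(1/2)) (x : ℝ) :
    IntegrableOn (fun t => (-(q ν t * t)) * Real.sin (x * t)) (Ioo (-1:ℝ) 1) := by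
  refine int_dom (C := 1) hν ((q_contOn.mul continuous_id.continuousOn).neg.mul
    (Real.continuous_sin.comp (continuous_const.mul continuous_id)).continuousOn)
    (fun t ht => ?_)
  rw [abs_mul, abs_neg, abs_mul, abs_of_nonneg (q_nonneg ht), one_mul]
  exact mul_abs_le2 (q_nonneg ht) (abs_t_le ht) (Real.abs_sin_le_one _)

lemma P2int (hν : ν > -(1/2)) (x : ℝ) :
    IntegrableOn (fun t => (-(q ν t * t ^ 2)) * Real.cos (x * t)) (Ioo (-1:ℝ) 1) := by
  refine int_dom (C := 1) hν ((q_contOn.mul (continuous_pow 2).continuousOn).neg.mul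
    (Real.continuous_cos.comp (continuous_const.mul continuous_id)).continuousOn)
    (fun t ht => ?_)
  rw [abs_mul, abs_neg, abs_mul, abs_of_nonneg (q_nonneg ht), one_mul]
  have h2 : |t ^ 2| ≤ 1 := by
    rw [abs_pow]
    exact pow_le_one₀ (abs_nonneg _) (abs_t_le ht)
  exact mul_abs_le2 (q_nonneg ht) h2 (Real.abs_cos_le_one _)

lemma hasDerivAt_P (hν : ν > -(1/2)) (x : ℝ) : HasDerivAt (P ν) (P1 ν x) x := by
  have := hasDerivAt_integral_of_dominated_loc_of_deriv_le (μ := volume.restrict (Ioo (-1:ℝ) 1))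
      (F := fun x t => q ν t * Real.cos (x * t))
      (F' := fun x t => (-(q ν t * t)) * Real.sin (x * t))
      (x₀ := x) (bound := q ν) (Metric.ball_mem_nhds x zero_lt_one)
      (Eventually.of_forall fun y =>
        ((Pint hν y).aestronglyMeasurable))
      (Pint hν x) ((P1int hν x).aestronglyMeasurable)
      (((ae_restrict_mem measurableSet_Ioo).mono ?_)) (q_integrableOn hν)
      (((ae_restrict_mem measurableSet_Ioo).mono ?_))
  · exact this.2
  · intro t ht y _
    rw [Real.norm_eq_abs, abs_mul, abs_neg, abs_mul, abs_of_nonneg (q_nonneg ht)]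
    exact mul_abs_le2 (q_nonneg ht) (abs_t_le ht) (Real.abs_sin_le_one _)
  · intro t _ y _
    have h := ((Real.hasDerivAt_cos (y * t)).comp y (hasDerivAt_mul_const t)).const_mul (q ν t)
    refine h.congr_deriv (Eq.symm ?_)
    ring

lemma hasDerivAt_P1 (hν : ν > -(1/2)) (x : ℝ) : HasDerivAt (P1 ν) (P2 ν x) x := by
  have := hasDerivAt_integral_of_dominated_loc_of_deriv_le (μ := volume.restrict (Ioo (-1:ℝ) 1))
      (F := fun x t => (-(q ν t * t)) * Real.sin (x * t))
      (F' := fun x t => (-(q ν t * t ^ 2)) * Real.cos (x * t))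
      (x₀ := x) (bound := q ν) (Metric.ball_mem_nhds x zero_lt_one)
      (Eventually.of_forall fun y =>
        ((P1int hν y).aestronglyMeasurable))
      (P1int hν x) ((P2int hν x).aestronglyMeasurable)
      (((ae_restrict_mem measurableSet_Ioo).mono ?_)) (q_integrableOn hν)
      (((ae_restrict_mem measurableSet_Ioo).mono ?_))
  · exact this.2
  · intro t ht y _
    rw [Real.norm_eq_abs, abs_mul, abs_neg, abs_mul, abs_of_nonneg (q_nonneg ht)]
    have h2 : |t ^ 2| ≤ 1 := by
      rw [abs_pow]; exact pow_le_one₀ (abs_nonneg _) (abs_t_le ht)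
    exact mul_abs_le2 (q_nonneg ht) h2 (Real.abs_cos_le_one _)
  · intro t _ y _
    have h := ((Real.hasDerivAt_sin (y * t)).comp y (hasDerivAt_mul_const t)).const_mul
      (-(q ν t * t))
    refine h.congr_deriv (Eq.symm ?_)
    ring

lemma abs_P_le (hν : ν > -(1/2)) (x : ℝ) : |P ν x| ≤ Bc ν := by
  have := MeasureTheory.norm_integral_le_of_norm_le (q_integrableOn hν)
    ((ae_restrict_mem measurableSet_Ioo).mono (fun t ht => ?_))
    (f := fun t => q ν t * Real.cos (x * t))
  · simpa [Real.norm_eq_abs, P, Bc] using this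
  · rw [Real.norm_eq_abs, abs_mul, abs_of_nonneg (q_nonneg ht)]
    exact mul_abs_le1 (q_nonneg ht) (Real.abs_cos_le_one _)

lemma abs_P1_le (hν : ν > -(1/2)) (x : ℝ) : |P1 ν x| ≤ Bc ν := by
  have := MeasureTheory.norm_integral_le_of_norm_le (q_integrableOn hν)
    ((ae_restrict_mem measurableSet_Ioo).mono (fun t ht => ?_))
    (f := fun t => (-(q ν t * t)) * Real.sin (x * t))
  · simpa [Real.norm_eq_abs, P1, Bc] using this
  · rw [Real.norm_eq_abs, abs_mul, abs_neg, abs_mul, abs_of_nonneg (q_nonneg ht)]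
    exact mul_abs_le2 (q_nonneg ht) (abs_t_le ht) (Real.abs_sin_le_one _)

lemma ode (hν : ν > -(1/2)) (x : ℝ) :
    x * P2 ν x + (2 * ν + 1) * P1 ν x + x * P ν x = 0 := by
  have hνpos : (0:ℝ) < ν + 1/2 := by linarith
  set h : ℝ → ℝ := fun t => (1 - t ^ 2) ^ (ν + 1/2) * Real.sin (x * t) with hh
  set H : ℝ → ℝ := fun t => (2 * ν + 1) * ((-(q ν t * t)) * Real.sin (x * t))
    + (x * ((-(q ν t * t ^ 2)) * Real.cos (x * t)) + x * (q ν t * Real.cos (x * t))) with hH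
  have hderiv : ∀ t ∈ Ioo (-1:ℝ) 1, HasDerivAt h (H t) t := by
    intro t ht
    have hpos : (0:ℝ) < 1 - t ^ 2 := by nlinarith [ht.1, ht.2]
    have hb : HasDerivAt (fun t : ℝ => 1 - t ^ 2) (-(2 * t)) t := by
      simpa using (hasDerivAt_pow 2 t).const_sub 1
    have hr : HasDerivAt (fun u : ℝ => u ^ (ν + 1/2))
        ((ν + 1/2) * (1 - t ^ 2) ^ (ν + 1/2 - 1)) (1 - t ^ 2) :=
      Real.hasDerivAt_rpow_const (Or.inl hpos.ne')
    have hcomp := hr.comp t hb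
    have hsin : HasDerivAt (fun t : ℝ => Real.sin (x * t)) (Real.cos (x * t) * x) t := by
      have := (Real.hasDerivAt_sin (x * t)).comp t ((hasDerivAt_id t).const_mul x)
      simpa [mul_comm, Function.comp_def] using this
    have hmul := hcomp.mul hsin
    have e1 : (1 - t ^ 2) ^ (ν + 1/2 - 1) = q ν t := by
      have he : ν + 1/2 - 1 = ν - 1/2 := by ring
      rw [q, he]
    have e2 : (1 - t ^ 2) ^ (ν + 1/2) = (1 - t ^ 2) * q ν t := by
      have : ν + 1/2 = (ν - 1/2) + 1 := by ring
      rw [this, Real.rpow_add_one hpos.ne', q]; ring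
    refine hmul.congr_deriv (Eq.symm ?_)
    simp only [Function.comp_apply, hH]
    rw [e1, e2]
    ring
  have hcont : ContinuousOn h (Icc (-1:ℝ) 1) := by
    apply ContinuousOn.mul
    · apply Continuous.continuousOn
      have : Continuous fun u : ℝ => u ^ (ν + 1/2) := by
        rw [continuous_iff_continuousAt]
        intro u
        exact Real.continuousAt_rpow_const _ _ (Or.inr hνpos.le)
      exact this.comp (continuous_const.sub (continuous_pow 2))
    · exact (Real.continuous_sin.comp (continuous_const.mul continuous_id)).continuousOn
  have hHint : IntegrableOn H (Ioo (-1:ℝ) 1) := by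
    have h1 := (P1int hν x).const_mul (2 * ν + 1)
    have h2 := (P2int hν x).const_mul x
    have h3 := (Pint hν x).const_mul x
    exact h1.add (h2.add h3)
  have hII : IntervalIntegrable H volume (-1:ℝ) 1 := by
    rw [intervalIntegrable_iff_integrableOn_Ioc_of_le (by norm_num)]
    rwa [integrableOn_Ioc_iff_integrableOn_Ioo]
  have hftc := intervalIntegral.integral_eq_sub_of_hasDerivAt_of_le (by norm_num : (-1:ℝ) ≤ 1)
    hcont hderiv hII
  have hend : h 1 = 0 ∧ h (-1) = 0 := by
    constructor <;>
    · simp only [hh]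
      norm_num [Real.zero_rpow hνpos.ne']
  have hzero : ∫ t in Ioo (-1:ℝ) 1, H t = 0 := by
    rw [← MeasureTheory.integral_Ioc_eq_integral_Ioo,
      ← intervalIntegral.integral_of_le (by norm_num : (-1:ℝ) ≤ 1), hftc, hend.1, hend.2, sub_zero]
  have i1 : IntegrableOn (fun t => (2 * ν + 1) * ((-(q ν t * t)) * Real.sin (x * t)))
      (Ioo (-1:ℝ) 1) := (P1int hν x).const_mul _
  have i2 : IntegrableOn (fun t => x * ((-(q ν t * t ^ 2)) * Real.cos (x * t)))
      (Ioo (-1:ℝ) 1) := (P2int hν x).const_mul _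
  have i3 : IntegrableOn (fun t => x * (q ν t * Real.cos (x * t)))
      (Ioo (-1:ℝ) 1) := (Pint hν x).const_mul _
  have i23 : IntegrableOn (fun t => x * ((-(q ν t * t ^ 2)) * Real.cos (x * t))
      + x * (q ν t * Real.cos (x * t))) (Ioo (-1:ℝ) 1) := i2.add i3
  have e0 : ∫ t in Ioo (-1:ℝ) 1, H t
      = (∫ t in Ioo (-1:ℝ) 1, (2 * ν + 1) * ((-(q ν t * t)) * Real.sin (x * t)))
        + ∫ t in Ioo (-1:ℝ) 1, (x * ((-(q ν t * t ^ 2)) * Real.cos (x * t))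
            + x * (q ν t * Real.cos (x * t))) :=
    MeasureTheory.integral_add i1 i23
  have e1 : ∫ t in Ioo (-1:ℝ) 1, (x * ((-(q ν t * t ^ 2)) * Real.cos (x * t))
        + x * (q ν t * Real.cos (x * t)))
      = (∫ t in Ioo (-1:ℝ) 1, x * ((-(q ν t * t ^ 2)) * Real.cos (x * t)))
        + ∫ t in Ioo (-1:ℝ) 1, x * (q ν t * Real.cos (x * t)) :=
    MeasureTheory.integral_add i2 i3
  have hsplit : ∫ t in Ioo (-1:ℝ) 1, H t
      = (2 * ν + 1) * P1 ν x + (x * P2 ν x + x * P ν x) := by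
    rw [e0, e1, MeasureTheory.integral_const_mul, MeasureTheory.integral_const_mul,
      MeasureTheory.integral_const_mul]
    rfl
  rw [hsplit] at hzero
  linarith

end FBaux

namespace FBaux

variable {ν : ℝ}

lemma gamma_half (n : ℕ) :
    Real.Gamma ((n:ℝ) + 1/2) * (4 ^ n * (n.factorial : ℝ)) =
      Real.Gamma (1/2) * ((2*n).factorial : ℝ) := by
  induction n with
  | zero => norm_num
  | succ n ih =>
    have hne : ((n:ℝ) + 1/2) ≠ 0 := by positivity
    have h1 : ((n:ℝ) + 1) + 1/2 = ((n:ℝ) + 1/2) + 1 := by ring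
    have h2 : Real.Gamma (((n:ℝ) + 1) + 1/2) = ((n:ℝ) + 1/2) * Real.Gamma ((n:ℝ) + 1/2) := by
      rw [h1, Real.Gamma_add_one hne]
    have h3 : 2 * (n + 1) = (2*n + 1) + 1 := by ring
    have h4 : ((2*(n+1)).factorial : ℝ)
        = (2*(n:ℝ) + 2) * ((2*(n:ℝ) + 1) * ((2*n).factorial : ℝ)) := by
      rw [h3, Nat.factorial_succ, Nat.factorial_succ]
      push_cast
      ring
    push_cast [h2, h4, Nat.factorial_succ, pow_succ]
    push_cast at ih
    linear_combination (4*((n:ℝ)+1)*((n:ℝ)+1/2)) * ih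

lemma even_integrand_int (hν : ν > -(1/2)) (n : ℕ) :
    IntegrableOn (fun t => t ^ (2*n) * q ν t) (Ioo (-1:ℝ) 1) := by
  refine int_dom (C := 1) hν ((continuous_pow _).continuousOn.mul q_contOn) fun t ht => ?_
  rw [abs_mul, one_mul, abs_of_nonneg (q_nonneg ht), abs_pow]
  calc |t| ^ (2*n) * q ν t ≤ 1 * q ν t :=
        mul_le_mul_of_nonneg_right (pow_le_one₀ (abs_nonneg _) (abs_t_le ht)) (q_nonneg ht)
    _ = q ν t := one_mul _

lemma even_reflect (n : ℕ) :
    ∫ t in Ioo (-1:ℝ) 0, t ^ (2*n) * q ν t = ∫ t in Ioo (0:ℝ) 1, t ^ (2*n) * q ν t := by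
  have himg : (fun t : ℝ => -t) '' (Ioo 0 1) = Ioo (-1:ℝ) 0 := by
    rw [Set.image_neg_eq_neg, Set.neg_Ioo]
    norm_num
  rw [← himg, integral_image_eq_integral_abs_deriv_smul measurableSet_Ioo
    (fun t _ => (hasDerivAt_neg t).hasDerivWithinAt) (neg_injective.injOn) _]
  refine setIntegral_congr_fun measurableSet_Ioo fun t _ => ?_
  have h1 : (-t) ^ (2*n) = t ^ (2*n) := Even.neg_pow (even_two_mul n) t
  have h2 : q ν (-t) = q ν t := by rw [q, q, neg_pow]; norm_num
  simp [h1, h2]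

lemma moment_half (hν : ν > -(1/2)) (n : ℕ) :
    ∫ t in Ioo (-1:ℝ) 1, t ^ (2*n) * q ν t
      = ∫ s in Ioo (0:ℝ) 1, s ^ ((n:ℝ) - 1/2) * (1 - s) ^ (ν - 1/2) := by
  have hint := even_integrand_int hν n
  have hdisj : Disjoint (Ioo (-1:ℝ) 0) (Ico (0:ℝ) 1) :=
    Set.disjoint_left.2 fun t h1 h2 => absurd h2.1 (not_le.2 h1.2)
  have hsub1 : Ioo (-1:ℝ) 0 ⊆ Ioo (-1:ℝ) 1 := fun t ht => ⟨ht.1, by linarith [ht.2]⟩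
  have hsub2 : Ico (0:ℝ) 1 ⊆ Ioo (-1:ℝ) 1 := fun t ht => ⟨by linarith [ht.1], ht.2⟩
  have hsplit : ∫ t in Ioo (-1:ℝ) 1, t ^ (2*n) * q ν t
      = (∫ t in Ioo (-1:ℝ) 0, t ^ (2*n) * q ν t)
        + ∫ t in Ico (0:ℝ) 1, t ^ (2*n) * q ν t := by
    rw [← MeasureTheory.setIntegral_union hdisj measurableSet_Ico (hint.mono_set hsub1)
      (hint.mono_set hsub2), Set.Ioo_union_Ico_eq_Ioo (by norm_num : (-1:ℝ) < 0)
      (by norm_num : (0:ℝ) ≤ 1)]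
  -- substitution t ↦ t^2
  have himg : (fun t : ℝ => t ^ 2) '' (Ioo 0 1) = Ioo (0:ℝ) 1 := by
    ext s
    constructor
    · rintro ⟨t, ⟨ht0, ht1⟩, rfl⟩
      exact ⟨pow_pos ht0 2, pow_lt_one₀ ht0.le ht1 (by norm_num)⟩
    · rintro ⟨hs0, hs1⟩
      refine ⟨Real.sqrt s, ⟨Real.sqrt_pos.2 hs0, ?_⟩, Real.sq_sqrt hs0.le⟩
      have := Real.sqrt_lt_sqrt hs0.le hs1
      rwa [Real.sqrt_one] at this
  have hinj : InjOn (fun t : ℝ => t ^ 2) (Ioo 0 1) := by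
    intro a ha b hb hab
    simp only at hab
    have h1 : (a - b) * (a + b) = 0 := by linear_combination hab
    have h2 : a + b > 0 := by linarith [ha.1, hb.1]
    rcases mul_eq_zero.1 h1 with h | h
    · linarith
    · linarith
  have hsub : ∫ s in Ioo (0:ℝ) 1, s ^ ((n:ℝ) - 1/2) * (1 - s) ^ (ν - 1/2)
      = ∫ t in Ioo (0:ℝ) 1, |2*t| • ((t^2) ^ ((n:ℝ) - 1/2) * (1 - t^2) ^ (ν - 1/2)) := by
    conv_lhs => rw [← himg]
    exact integral_image_eq_integral_abs_deriv_smul measurableSet_Ioo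
      (fun t _ => by simpa using (hasDerivAt_pow 2 t).hasDerivWithinAt) hinj _
  have hpt : ∀ t ∈ Ioo (0:ℝ) 1,
      |2*t| • ((t^2) ^ ((n:ℝ) - 1/2) * (1 - t^2) ^ (ν - 1/2)) = 2 * (t ^ (2*n) * q ν t) := by
    intro t ht
    have ht0 : (0:ℝ) < t := ht.1
    have h1 : ((t:ℝ)^2) ^ ((n:ℝ) - 1/2) = t ^ ((2:ℝ) * ((n:ℝ) - 1/2)) := by
      rw [← Real.rpow_natCast t 2, ← Real.rpow_mul ht0.le]
      norm_num
    have e2 : (2:ℝ) * ((n:ℝ) - 1/2) + 1 = ((2*n : ℕ) : ℝ) := by push_cast; ring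
    rw [smul_eq_mul, abs_of_pos (by linarith : (0:ℝ) < 2*t), h1]
    have h3 : t * t ^ ((2:ℝ) * ((n:ℝ) - 1/2)) = t ^ (2*n) := by
      rw [mul_comm, ← Real.rpow_add_one ht0.ne', e2, Real.rpow_natCast]
    calc 2*t * (t ^ ((2:ℝ) * ((n:ℝ) - 1/2)) * (1 - t^2) ^ (ν - 1/2))
        = 2 * ((t * t ^ ((2:ℝ) * ((n:ℝ) - 1/2))) * (1 - t^2) ^ (ν - 1/2)) := by ring
      _ = 2 * (t ^ (2*n) * q ν t) := by rw [h3]; rfl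
  have hsub2' : ∫ s in Ioo (0:ℝ) 1, s ^ ((n:ℝ) - 1/2) * (1 - s) ^ (ν - 1/2)
      = 2 * ∫ t in Ioo (0:ℝ) 1, t ^ (2*n) * q ν t := by
    rw [hsub, setIntegral_congr_fun measurableSet_Ioo hpt, MeasureTheory.integral_const_mul]
  rw [hsplit, even_reflect, MeasureTheory.integral_Ico_eq_integral_Ioo, hsub2']
  ring

lemma moment (hν : ν > -(1/2)) (n : ℕ) :
    ∫ t in Ioo (-1:ℝ) 1, t ^ (2*n) * q ν t
      = Real.Gamma ((n:ℝ) + 1/2) * Real.Gamma (ν + 1/2) / Real.Gamma ((n:ℝ) + ν + 1) := by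
  rw [moment_half hν n]
  set u : ℂ := (n:ℂ) + 1/2 with hu_def
  set v : ℂ := (ν:ℂ) + 1/2 with hv_def
  have hu : 0 < u.re := by
    simp only [hu_def, Complex.add_re, Complex.natCast_re]
    norm_num
    positivity
  have hv : 0 < v.re := by
    simp only [hv_def, Complex.add_re, Complex.ofReal_re]
    norm_num
    linarith
  have hbeta := Complex.Gamma_mul_Gamma_eq_betaIntegral hu hv
  have hBval : Complex.betaIntegral u v
      = ((∫ s in Ioo (0:ℝ) 1, s ^ ((n:ℝ) - 1/2) * (1 - s) ^ (ν - 1/2) : ℝ) : ℂ) := by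
    calc Complex.betaIntegral u v
        = ∫ s in Ioo (0:ℝ) 1, ((s ^ ((n:ℝ) - 1/2) * (1 - s) ^ (ν - 1/2) : ℝ) : ℂ) := by
          rw [Complex.betaIntegral, intervalIntegral.integral_of_le zero_le_one,
            MeasureTheory.integral_Ioc_eq_integral_Ioo]
          refine setIntegral_congr_fun measurableSet_Ioo fun s hs => ?_
          have h0 : (0:ℝ) ≤ s := hs.1.le
          have h0' : (0:ℝ) ≤ 1 - s := by linarith [hs.2]
          have eu : u - 1 = (((n:ℝ) - 1/2 : ℝ) : ℂ) := by
            rw [hu_def]; push_cast; ring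
          have ev : v - 1 = ((ν - 1/2 : ℝ) : ℂ) := by
            rw [hv_def]; push_cast; ring
          have e1 : (1 : ℂ) - (s:ℂ) = ((1 - s : ℝ) : ℂ) := by push_cast; ring
          rw [eu, ev, e1, ← Complex.ofReal_cpow h0, ← Complex.ofReal_cpow h0',
            ← Complex.ofReal_mul]
      _ = ((∫ s in Ioo (0:ℝ) 1, s ^ ((n:ℝ) - 1/2) * (1 - s) ^ (ν - 1/2) : ℝ) : ℂ) :=
          _root_.integral_ofReal
  have hgu : Complex.Gamma u = ((Real.Gamma ((n:ℝ) + 1/2) : ℝ) : ℂ) := by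
    rw [show u = ((((n:ℝ) + 1/2 : ℝ)) : ℂ) by rw [hu_def]; push_cast; ring, Complex.Gamma_ofReal]
  have hgv : Complex.Gamma v = ((Real.Gamma (ν + 1/2) : ℝ) : ℂ) := by
    rw [show v = (((ν + 1/2 : ℝ)) : ℂ) by rw [hv_def]; push_cast; ring, Complex.Gamma_ofReal]
  have hguv : Complex.Gamma (u + v) = ((Real.Gamma ((n:ℝ) + ν + 1) : ℝ) : ℂ) := by
    rw [show u + v = ((((n:ℝ) + ν + 1 : ℝ)) : ℂ) by rw [hu_def, hv_def]; push_cast; ring,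
      Complex.Gamma_ofReal]
  rw [hgu, hgv, hguv, hBval, ← Complex.ofReal_mul, ← Complex.ofReal_mul] at hbeta
  have hreal := Complex.ofReal_inj.1 hbeta
  have hc : (0:ℝ) < (n:ℝ) + ν + 1 := by
    have : (0:ℝ) ≤ (n:ℝ) := Nat.cast_nonneg n
    linarith
  have hcne : Real.Gamma ((n:ℝ) + ν + 1) ≠ 0 := (Real.Gamma_pos_of_pos hc).ne'
  rw [hreal, mul_comm, mul_div_assoc, div_self hcne, mul_one]

end FBaux

namespace FBaux

variable {ν : ℝ}

lemma summable_aux {x : ℝ} (hx : 0 < x) {B : ℝ} (hB : 0 ≤ B) :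
    Summable (fun n : ℕ => x ^ (2*n) / ((2*n).factorial : ℝ) * B) := by
  apply Summable.mul_right
  refine Summable.of_nonneg_of_le (fun n => by positivity) (fun n => ?_)
    (Real.summable_pow_div_factorial (x^2))
  rw [pow_mul]
  exact div_le_div_of_nonneg_left (by positivity) (by positivity)
    (Nat.cast_le.2 (Nat.factorial_le (by omega)))

lemma Bc_nonneg : 0 ≤ Bc ν :=
  MeasureTheory.setIntegral_nonneg measurableSet_Ioo fun _ ht => q_nonneg ht

lemma P_eq_tsum (hν : ν > -(1/2)) {x : ℝ} (hx : 0 < x) :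
    P ν x = ∑' m : ℕ, ((-1:ℝ)^m * x^(2*m) / ((2*m).factorial : ℝ))
      * (Real.Gamma ((m:ℝ) + 1/2) * Real.Gamma (ν + 1/2) / Real.Gamma ((m:ℝ) + ν + 1)) := by
  set F : ℕ → ℝ → ℝ := fun m t => ((-1:ℝ)^m * x^(2*m) / ((2*m).factorial : ℝ))
    * (t^(2*m) * q ν t) with hF
  have hFint : ∀ m : ℕ, Integrable (F m) (volume.restrict (Ioo (-1:ℝ) 1)) :=
    fun m => (even_integrand_int hν m).const_mul _
  have habs : ∀ m : ℕ, |(-1:ℝ)^m * x^(2*m) / ((2*m).factorial : ℝ)|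
      = x^(2*m) / ((2*m).factorial : ℝ) := by
    intro m
    rw [abs_div, abs_mul, abs_pow, abs_pow, abs_neg, abs_one, one_pow, one_mul,
      abs_of_pos hx, abs_of_pos (by positivity : (0:ℝ) < ((2*m).factorial : ℝ))]
  have hnorm_le : ∀ m : ℕ, (∫ t in Ioo (-1:ℝ) 1, ‖F m t‖)
      ≤ x^(2*m) / ((2*m).factorial : ℝ) * Bc ν := by
    intro m
    have hq := q_integrableOn hν
    have : ∫ t in Ioo (-1:ℝ) 1, ‖F m t‖
        ≤ ∫ t in Ioo (-1:ℝ) 1, (x^(2*m) / ((2*m).factorial : ℝ)) * q ν t := by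
      refine MeasureTheory.setIntegral_mono_on ((hFint m).norm) (hq.const_mul _)
        measurableSet_Ioo fun t ht => ?_
      rw [hF]
      simp only [Real.norm_eq_abs]
      rw [abs_mul, habs m, abs_mul, abs_pow, abs_of_nonneg (q_nonneg ht)]
      have h1 : |t| ^ (2*m) * q ν t ≤ 1 * q ν t :=
        mul_le_mul_of_nonneg_right (pow_le_one₀ (abs_nonneg _) (abs_t_le ht)) (q_nonneg ht)
      have h2 : (0:ℝ) ≤ x^(2*m) / ((2*m).factorial : ℝ) := by positivity
      calc x^(2*m) / ((2*m).factorial : ℝ) * (|t| ^ (2*m) * q ν t)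
          ≤ x^(2*m) / ((2*m).factorial : ℝ) * (1 * q ν t) :=
            mul_le_mul_of_nonneg_left h1 h2
        _ = x^(2*m) / ((2*m).factorial : ℝ) * q ν t := by ring
    calc (∫ t in Ioo (-1:ℝ) 1, ‖F m t‖)
        ≤ ∫ t in Ioo (-1:ℝ) 1, (x^(2*m) / ((2*m).factorial : ℝ)) * q ν t := this
      _ = x^(2*m) / ((2*m).factorial : ℝ) * Bc ν := MeasureTheory.integral_const_mul _ _
  have hsum : Summable fun m => ∫ t in Ioo (-1:ℝ) 1, ‖F m t‖ :=
    Summable.of_nonneg_of_le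
      (fun m => MeasureTheory.integral_nonneg (fun t => norm_nonneg _))
      hnorm_le (summable_aux hx Bc_nonneg)
  have hswap := MeasureTheory.integral_tsum_of_summable_integral_norm hFint hsum
  have hpt : ∀ t : ℝ, (∑' m : ℕ, F m t) = q ν t * Real.cos (x * t) := by
    intro t
    rw [Real.cos_eq_tsum (x * t), ← tsum_mul_left]
    refine tsum_congr fun m => ?_
    rw [hF]
    simp only
    rw [mul_pow]
    ring
  have hPP : P ν x = ∑' m : ℕ, ∫ t in Ioo (-1:ℝ) 1, F m t := by
    rw [hswap, P]
    exact setIntegral_congr_fun measurableSet_Ioo fun t _ => (hpt t).symm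
  rw [hPP]
  refine tsum_congr fun m => ?_
  rw [hF]
  simp only
  rw [MeasureTheory.integral_const_mul, moment hν m]

lemma kernel_eq (hν : ν > -(1/2)) {x : ℝ} (hx : 0 < x) :
    fbKernel ν x = (1 / ((2:ℝ) ^ ν * (Real.Gamma (ν + 1/2) * Real.Gamma (1/2)))) * P ν x := by
  rw [fbKernel, if_neg hx.ne', besselJ, ← tsum_mul_left, P_eq_tsum hν hx, ← tsum_mul_left]
  refine tsum_congr fun m => ?_
  have hx2 : (0:ℝ) < x / 2 := by linarith
  have e1 : (x/2) ^ (2*(m:ℝ) + ν) = (x/2) ^ (2*m : ℕ) * (x/2) ^ ν := by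
    have hc : (2*(m:ℝ)) = ((2*m : ℕ) : ℝ) := by push_cast; ring
    rw [Real.rpow_add hx2, hc, Real.rpow_natCast]
  have e2 : ((x/2) ^ ν : ℝ) = x ^ ν / 2 ^ ν := Real.div_rpow hx.le (by norm_num : (0:ℝ) ≤ 2) ν
  have e3 : x ^ (-ν) * x ^ ν = 1 := by
    rw [← Real.rpow_add hx]
    norm_num
  have e4 : ((x/2) ^ (2*m : ℕ) : ℝ) = x ^ (2*m) / (4:ℝ)^m := by
    rw [div_pow]
    congr 1
    rw [pow_mul]
    norm_num
  have hg := gamma_half m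
  have hΓ1 : (0:ℝ) < Real.Gamma (1/2) := Real.Gamma_pos_of_pos (by norm_num)
  have hΓ2 : (0:ℝ) < Real.Gamma (ν + 1/2) := Real.Gamma_pos_of_pos (by linarith)
  have hΓ3 : (0:ℝ) < Real.Gamma ((m:ℝ) + ν + 1) := by
    refine Real.Gamma_pos_of_pos ?_
    have : (0:ℝ) ≤ (m:ℝ) := Nat.cast_nonneg m
    linarith
  have hfm : (0:ℝ) < (m.factorial : ℝ) := by positivity
  have hfm2 : (0:ℝ) < ((2*m).factorial : ℝ) := by positivity
  have h2ν : (0:ℝ) < (2:ℝ) ^ ν := Real.rpow_pos_of_pos (by norm_num) ν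
  have h4m : (0:ℝ) < (4:ℝ) ^ m := by positivity
  have hxν : (0:ℝ) < x ^ ν := Real.rpow_pos_of_pos hx ν
  set G1 := Real.Gamma ((m:ℝ) + 1/2) with hG1
  set G2 := Real.Gamma (ν + 1/2) with hG2
  set G3 := Real.Gamma ((m:ℝ) + ν + 1) with hG3
  set Gh := Real.Gamma (1/2) with hGh
  rw [e1, e2, e4, Real.rpow_neg hx.le]
  field_simp
  linear_combination (-1:ℝ) * hg

lemma kernel_package (hν : ν > -(1/2)) :
    ∃ (φ φ1 φ2 : ℝ → ℝ) (M : ℝ),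
      (∀ u, HasDerivAt φ (φ1 u) u) ∧ (∀ u, HasDerivAt φ1 (φ2 u) u) ∧
      (∀ u, |φ u| ≤ M) ∧ (∀ u, |φ1 u| ≤ M) ∧
      (∀ u : ℝ, 0 < u → fbKernel ν u = φ u) ∧
      (∀ u : ℝ, u * φ2 u + (2*ν+1) * φ1 u + u * φ u = 0) := by
  set K : ℝ := 1 / ((2:ℝ) ^ ν * (Real.Gamma (ν + 1/2) * Real.Gamma (1/2))) with hK
  refine ⟨fun u => K * P ν u, fun u => K * P1 ν u, fun u => K * P2 ν u, |K| * Bc ν,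
    fun u => (hasDerivAt_P hν u).const_mul K,
    fun u => (hasDerivAt_P1 hν u).const_mul K,
    fun u => ?_, fun u => ?_, fun u hu => kernel_eq hν hu, fun u => ?_⟩
  · rw [abs_mul]
    exact mul_le_mul_of_nonneg_left (abs_P_le hν u) (abs_nonneg K)
  · rw [abs_mul]
    exact mul_le_mul_of_nonneg_left (abs_P1_le hν u) (abs_nonneg K)
  · have h0 := ode hν u
    linear_combination K * h0

lemma wInt (ν : ℝ) {h : ℝ → ℂ} (hh : Integrable h (wMeasure ν)) :
    IntegrableOn (fun x => (x ^ (2*ν+1) : ℝ) • h x) (Ioi (0:ℝ)) := by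
  rw [wMeasure] at hh
  have hmeas : AEMeasurable (fun x : ℝ => Real.toNNReal (x ^ (2*ν+1)))
      (volume.restrict (Ioi (0:ℝ))) := by
    apply Measurable.aemeasurable
    measurability
  have heq : (fun x : ℝ => ENNReal.ofReal (x ^ (2*ν+1)))
      = fun x => ((Real.toNNReal (x ^ (2*ν+1)) : NNReal) : ENNReal) := rfl
  rw [heq, integrable_withDensity_iff_integrable_smul₀ hmeas] at hh
  refine hh.congr ((ae_restrict_mem measurableSet_Ioi).mono fun x hx => ?_)
  show (x ^ (2*ν+1)).toNNReal • h x = (x ^ (2*ν+1) : ℝ) • h x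
  rw [NNReal.smul_def, Real.coe_toNNReal _ (Real.rpow_nonneg (le_of_lt hx) _)]

lemma bdd_smul {c w : ℝ → ℝ} {h : ℝ → ℂ} {M : ℝ} {s : Set ℝ} (hs : MeasurableSet s)
    (hc : ContinuousOn c s) (hM : ∀ x ∈ s, |c x| ≤ M)
    (hh : IntegrableOn (fun x => w x • h x) s) :
    IntegrableOn (fun x => (c x * w x) • h x) s := by
  have hmeas : AEStronglyMeasurable (fun x => c x • (w x • h x)) (volume.restrict s) :=
    (hc.aestronglyMeasurable hs).smul hh.1
  refine Integrable.mono' (hh.norm.const_mul M) (by simpa [mul_smul] using hmeas)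
    ((ae_restrict_mem hs).mono fun x hx => ?_)
  rw [norm_smul, Real.norm_eq_abs, abs_mul]
  calc |c x| * |w x| * ‖h x‖ ≤ M * (|w x| * ‖h x‖) := by
        rw [mul_assoc]
        exact mul_le_mul_of_nonneg_right (hM x hx) (by positivity)
    _ = M * ‖w x • h x‖ := by rw [norm_smul, Real.norm_eq_abs]

lemma limit_zero {g : ℝ → ℂ} {L : ℂ} (hgi : IntegrableOn g (Ioi (1:ℝ)))
    (hg : Tendsto g atTop (𝓝 L)) : L = 0 := by
  by_contra hL
  have hLpos : (0:ℝ) < ‖L‖ := norm_pos_iff.2 hL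
  have hnorm : Tendsto (fun x => ‖g x‖) atTop (𝓝 ‖L‖) := hg.norm
  have hev : ∀ᶠ x in atTop, ‖L‖/2 ≤ ‖g x‖ :=
    hnorm.eventually (eventually_ge_nhds (by linarith))
  obtain ⟨A, hA⟩ := eventually_atTop.1 hev
  set B := max A 2 with hB
  have hB1 : (1:ℝ) ≤ B := le_trans (by norm_num) (le_max_right A 2)
  have hsub : IntegrableOn g (Ioi B) := hgi.mono_set (Ioi_subset_Ioi hB1)
  have hconst : Integrable (fun _ : ℝ => (‖L‖/2 : ℝ)) (volume.restrict (Ioi B)) := by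
    refine Integrable.mono' hsub.norm aestronglyMeasurable_const
      ((ae_restrict_mem measurableSet_Ioi).mono fun x hx => ?_)
    rw [Real.norm_eq_abs, abs_of_nonneg (by positivity)]
    exact hA x (le_trans (le_max_left A 2) hx.le)
  rw [integrable_const_iff] at hconst
  rcases hconst with h | h
  · have : ‖L‖ = 0 := by
      have := h
      norm_num at this
      linarith
    linarith
  · have h := h.measure_univ_lt_top
    rw [Measure.restrict_apply_univ, Real.volume_Ioi] at h
    exact absurd h (lt_irrefl ⊤)

lemma P_continuous (hν : ν > -(1/2)) : Continuous (P ν) :=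
  continuous_iff_continuousAt.2 fun u => (hasDerivAt_P hν u).continuousAt

lemma P1_continuous (hν : ν > -(1/2)) : Continuous (P1 ν) :=
  continuous_iff_continuousAt.2 fun u => (hasDerivAt_P1 hν u).continuousAt

end FBaux

theorem stmt5 (ν : ℝ) (hν : ν > -(1/2)) (f f' f'' : ℝ → ℂ)
    (hd1 : ∀ x ∈ Ioi (0 : ℝ), HasDerivAt f (f' x) x)
    (hd2 : ∀ x ∈ Ioi (0 : ℝ), HasDerivAt f' (f'' x) x)
    (hc2 : ContinuousOn f'' (Ioi 0))
    (hf0 : ∃ L, Tendsto f (nhdsWithin 0 (Ioi 0)) (nhds L))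
    (hf'0 : ∃ L, Tendsto f' (nhdsWithin 0 (Ioi 0)) (nhds L))
    (hfi : Integrable f (wMeasure ν))
    (hf'i : Integrable f' (wMeasure ν))
    (hΔi : Integrable (fun x => f'' x + ((2 * ν + 1) / x : ℝ) • f' x) (wMeasure ν)) :
    ∀ y > (0 : ℝ),
      fbTransform ν (fun x => f'' x + ((2 * ν + 1) / x : ℝ) • f' x) y
        = (-(y ^ 2) : ℝ) • fbTransform ν f y := by
  intro y hy
  obtain ⟨Lf, hLf⟩ := hf0
  obtain ⟨Lf', hLf'⟩ := hf'0
  set Δ : ℝ → ℂ := fun x => f'' x + ((2 * ν + 1) / x : ℝ) • f' x with hΔdef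
  obtain ⟨φ, φ1, φ2, M, hφd, hφ1d, hφb, hφ1b, hkerφ, hode⟩ := FBaux.kernel_package hν
  have hνpos : (0:ℝ) < 2 * ν + 1 := by linarith
  have hker : ∀ x ∈ Ioi (0:ℝ), fbKernel ν (x * y) = φ (x * y) :=
    fun x hx => hkerφ (x * y) (mul_pos hx hy)
  have hφcont : Continuous fun x : ℝ => φ (x * y) :=
    (continuous_iff_continuousAt.2 fun u => (hφd u).continuousAt).comp
      (continuous_id.mul continuous_const)
  have hφ1cont : Continuous fun x : ℝ => φ1 (x * y) :=
    (continuous_iff_continuousAt.2 fun u => (hφ1d u).continuousAt).comp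
      (continuous_id.mul continuous_const)
  -- integrability conversions
  have hfI : IntegrableOn (fun x => (x ^ (2*ν+1) : ℝ) • f x) (Ioi (0:ℝ)) := FBaux.wInt ν hfi
  have hf'I : IntegrableOn (fun x => (x ^ (2*ν+1) : ℝ) • f' x) (Ioi (0:ℝ)) := FBaux.wInt ν hf'i
  have hΔI : IntegrableOn (fun x => (x ^ (2*ν+1) : ℝ) • Δ x) (Ioi (0:ℝ)) := FBaux.wInt ν hΔi
  -- g and G
  set g : ℝ → ℂ := fun x => (φ (x*y) * x ^ (2*ν+1)) • f' x
      - ((y * φ1 (x*y)) * x ^ (2*ν+1)) • f x with hgdef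
  set G : ℝ → ℂ := fun x => (φ (x*y) * x ^ (2*ν+1)) • Δ x
      + ((y^2 * φ (x*y)) * x ^ (2*ν+1)) • f x with hGdef
  have hGint : IntegrableOn G (Ioi 0) := by
    refine Integrable.add ?_ ?_
    · exact FBaux.bdd_smul measurableSet_Ioi hφcont.continuousOn
        (fun x _ => hφb (x*y)) hΔI
    · refine FBaux.bdd_smul measurableSet_Ioi
        (continuous_const.mul hφcont).continuousOn (M := y^2 * M) (fun x _ => ?_) hfI
      rw [abs_mul, abs_of_nonneg (sq_nonneg y)]
      exact mul_le_mul_of_nonneg_left (hφb (x*y)) (sq_nonneg y)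
  have hgint : IntegrableOn g (Ioi 0) := by
    refine Integrable.sub ?_ ?_
    · exact FBaux.bdd_smul measurableSet_Ioi hφcont.continuousOn
        (fun x _ => hφb (x*y)) hf'I
    · refine FBaux.bdd_smul measurableSet_Ioi
        (continuous_const.mul hφ1cont).continuousOn (M := |y| * M) (fun x _ => ?_) hfI
      rw [abs_mul]
      exact mul_le_mul_of_nonneg_left (hφ1b (x*y)) (abs_nonneg y)
  -- derivative of g is G on Ioi 0
  have hgd : ∀ x ∈ Ioi (0:ℝ), HasDerivAt g (G x) x := by
    intro x hx
    have hx0 : x ≠ 0 := ne_of_gt hx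
    have hw : HasDerivAt (fun x : ℝ => x ^ (2*ν+1)) ((2*ν+1) * x ^ (2*ν)) x := by
      have h := Real.hasDerivAt_rpow_const (x := x) (p := 2*ν+1) (Or.inl hx0)
      have he : 2*ν+1-1 = 2*ν := by ring
      rwa [he] at h
    have hφx : HasDerivAt (fun x : ℝ => φ (x*y)) (φ1 (x*y) * y) x :=
      (hφd (x*y)).comp x (hasDerivAt_mul_const y)
    have hφ1x : HasDerivAt (fun x : ℝ => φ1 (x*y)) (φ2 (x*y) * y) x :=
      (hφ1d (x*y)).comp x (hasDerivAt_mul_const y)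
    have hA : HasDerivAt (fun x : ℝ => φ (x*y) * x ^ (2*ν+1))
        (φ1 (x*y) * y * x ^ (2*ν+1) + φ (x*y) * ((2*ν+1) * x ^ (2*ν))) x := hφx.mul hw
    have hB : HasDerivAt (fun x : ℝ => (y * φ1 (x*y)) * x ^ (2*ν+1))
        (y * (φ2 (x*y) * y) * x ^ (2*ν+1) + (y * φ1 (x*y)) * ((2*ν+1) * x ^ (2*ν))) x :=
      (hφ1x.const_mul y).mul hw
    have hd := (hA.smul (hd2 x hx)).sub (hB.smul (hd1 x hx))
    have hodeM := hode (x*y)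
    have hw1 : x ^ (2*ν+1) = x ^ (2*ν) * x := Real.rpow_add_one hx0 (2*ν)
    refine hd.congr_deriv (Eq.symm ?_)
    rw [hGdef, hΔdef]
    simp only
    rw [hw1]
    match_scalars
    · ring
    · field_simp
      ring
    · linear_combination (y * x ^ (2*ν)) * hodeM
  -- limit of g at 0+
  have hg0 : Tendsto g (nhdsWithin 0 (Ioi 0)) (nhds (0:ℂ)) := by
    have hwten : Tendsto (fun x : ℝ => x ^ (2*ν+1)) (nhdsWithin 0 (Ioi 0)) (nhds 0) := by
      have hc : ContinuousAt (fun x : ℝ => x ^ (2*ν+1)) 0 :=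
        Real.continuousAt_rpow_const 0 _ (Or.inr hνpos.le)
      have h2 : Tendsto (fun x : ℝ => x ^ (2*ν+1)) (nhds 0) (nhds ((0:ℝ) ^ (2*ν+1))) :=
        hc.tendsto
      rw [Real.zero_rpow hνpos.ne'] at h2
      exact h2.mono_left nhdsWithin_le_nhds
    have hφten : Tendsto (fun x : ℝ => φ (x*y)) (nhdsWithin 0 (Ioi 0)) (nhds (φ 0)) := by
      have h2 := hφcont.tendsto 0
      rw [zero_mul] at h2
      exact h2.mono_left nhdsWithin_le_nhds
    have hφ1ten : Tendsto (fun x : ℝ => φ1 (x*y)) (nhdsWithin 0 (Ioi 0)) (nhds (φ1 0)) := by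
      have h2 := hφ1cont.tendsto 0
      rw [zero_mul] at h2
      exact h2.mono_left nhdsWithin_le_nhds
    have h1 : Tendsto (fun x => (φ (x*y) * x ^ (2*ν+1)) • f' x)
        (nhdsWithin 0 (Ioi 0)) (nhds ((φ 0 * 0) • Lf')) := (hφten.mul hwten).smul hLf'
    have h2 : Tendsto (fun x => ((y * φ1 (x*y)) * x ^ (2*ν+1)) • f x)
        (nhdsWithin 0 (Ioi 0)) (nhds (((y * φ1 0) * 0) • Lf)) :=
      ((tendsto_const_nhds.mul hφ1ten).mul hwten).smul hLf
    have h4 : ((φ 0 * 0 : ℝ)) • Lf' - (((y * φ1 0) * 0 : ℝ)) • Lf = (0:ℂ) := by simp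
    rw [hgdef]
    exact h4 ▸ (h1.sub h2)
  -- limit of g at ∞
  have hIG1 : IntegrableOn G (Ioi 1) := hGint.mono_set (Ioi_subset_Ioi (by norm_num))
  have hgtop : Tendsto g atTop (nhds (g 1 + ∫ x in Ioi 1, G x)) := by
    have h1 : Tendsto (fun b => g 1 + ∫ x in (1:ℝ)..b, G x) atTop
        (nhds (g 1 + ∫ x in Ioi 1, G x)) :=
      tendsto_const_nhds.add
        (MeasureTheory.intervalIntegral_tendsto_integral_Ioi 1 hIG1 tendsto_id)
    refine Tendsto.congr' ?_ h1
    filter_upwards [eventually_ge_atTop (1:ℝ)] with b hb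
    have hsub : uIcc (1:ℝ) b ⊆ Ioi 0 := by
      rw [uIcc_of_le hb]
      intro t ht
      exact lt_of_lt_of_le zero_lt_one ht.1
    have hIIG : IntervalIntegrable G volume 1 b := by
      rw [intervalIntegrable_iff_integrableOn_Ioc_of_le hb]
      exact hIG1.mono_set Ioc_subset_Ioi_self
    have hftc := intervalIntegral.integral_eq_sub_of_hasDerivAt
      (fun t ht => hgd t (hsub ht)) hIIG
    rw [hftc]
    ring
  have hL0 : g 1 + ∫ x in Ioi 1, G x = 0 :=
    FBaux.limit_zero (hgint.mono_set (Ioi_subset_Ioi (by norm_num))) hgtop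
  rw [hL0] at hgtop
  -- ∫_{Ioi 0} G = 0
  have haux : ∀ n : ℕ, (0:ℝ) < 1/((n:ℝ)+1) := fun n => by positivity
  have hIoiEq : (⋃ n : ℕ, Ioi (1/((n:ℝ)+1))) = Ioi (0:ℝ) := by
    ext x
    simp only [mem_iUnion, mem_Ioi]
    constructor
    · rintro ⟨n, hn⟩
      exact lt_trans (haux n) hn
    · intro hx
      obtain ⟨n, hn⟩ := exists_nat_one_div_lt hx
      exact ⟨n, hn⟩
  have hseq : ∀ n : ℕ, ∫ x in Ioi (1/((n:ℝ)+1)), G x = - g (1/((n:ℝ)+1)) := by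
    intro n
    have hpos := haux n
    have h2 := MeasureTheory.integral_Ioi_of_hasDerivAt_of_tendsto
      (f := g) (f' := G) (a := 1/((n:ℝ)+1)) (m := 0)
      ((hgd _ hpos).continuousAt.continuousWithinAt)
      (fun x hx => hgd x (lt_trans hpos hx))
      (hGint.mono_set (Ioi_subset_Ioi hpos.le)) hgtop
    rw [h2]
    ring
  have htend1 : Tendsto (fun n : ℕ => ∫ x in Ioi (1/((n:ℝ)+1)), G x) atTop
      (nhds (∫ x in Ioi (0:ℝ), G x)) := by
    have hmono : Monotone fun n : ℕ => Ioi (1/((n:ℝ)+1)) := by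
      intro n m hnm
      apply Ioi_subset_Ioi
      apply one_div_le_one_div_of_le (by positivity)
      have : (n:ℝ) ≤ (m:ℝ) := Nat.cast_le.2 hnm
      linarith
    have h2 := MeasureTheory.tendsto_setIntegral_of_monotone
      (fun n : ℕ => measurableSet_Ioi) hmono (by rw [hIoiEq]; exact hGint)
    rwa [hIoiEq] at h2
  have htend2 : Tendsto (fun n : ℕ => ∫ x in Ioi (1/((n:ℝ)+1)), G x) atTop (nhds 0) := by
    have hseqten : Tendsto (fun n : ℕ => 1/((n:ℝ)+1)) atTop (nhdsWithin 0 (Ioi 0)) := by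
      rw [tendsto_nhdsWithin_iff]
      exact ⟨tendsto_one_div_add_atTop_nhds_zero_nat,
        Eventually.of_forall fun n => haux n⟩
    have h2 := hg0.comp hseqten
    have hneg : Tendsto (fun n : ℕ => - g (1/((n:ℝ)+1))) atTop (nhds 0) := by
      simpa using h2.neg
    exact Tendsto.congr (fun n => (hseq n).symm) hneg
  have hGzero : ∫ x in Ioi (0:ℝ), G x = 0 := tendsto_nhds_unique htend1 htend2
  -- final assembly
  have hint1 : IntegrableOn (fun x => (φ (x*y) * x ^ (2*ν+1)) • Δ x) (Ioi 0) :=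
    FBaux.bdd_smul measurableSet_Ioi hφcont.continuousOn (fun x _ => hφb (x*y)) hΔI
  have hint2 : IntegrableOn (fun x => ((y^2 * φ (x*y)) * x ^ (2*ν+1)) • f x) (Ioi 0) := by
    refine FBaux.bdd_smul measurableSet_Ioi
      (continuous_const.mul hφcont).continuousOn (M := y^2 * M) (fun x _ => ?_) hfI
    rw [abs_mul, abs_of_nonneg (sq_nonneg y)]
    exact mul_le_mul_of_nonneg_left (hφb (x*y)) (sq_nonneg y)
  have hsplit : ∫ x in Ioi (0:ℝ), G x
      = (∫ x in Ioi (0:ℝ), (φ (x*y) * x ^ (2*ν+1)) • Δ x)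
        + ∫ x in Ioi (0:ℝ), ((y^2 * φ (x*y)) * x ^ (2*ν+1)) • f x :=
    MeasureTheory.integral_add hint1 hint2
  have hTΔ : fbTransform ν Δ y = ∫ x in Ioi (0:ℝ), (φ (x*y) * x ^ (2*ν+1)) • Δ x := by
    rw [fbTransform]
    exact setIntegral_congr_fun measurableSet_Ioi fun x hx => by rw [hker x hx]
  have hTf : fbTransform ν f y = ∫ x in Ioi (0:ℝ), (φ (x*y) * x ^ (2*ν+1)) • f x := by
    rw [fbTransform]
    exact setIntegral_congr_fun measurableSet_Ioi fun x hx => by rw [hker x hx]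
  have hpull : ∫ x in Ioi (0:ℝ), ((y^2 * φ (x*y)) * x ^ (2*ν+1)) • f x
      = (y^2 : ℝ) • ∫ x in Ioi (0:ℝ), (φ (x*y) * x ^ (2*ν+1)) • f x := by
    rw [← MeasureTheory.integral_smul]
    refine setIntegral_congr_fun measurableSet_Ioi fun x _ => ?_
    rw [smul_smul]
    congr 1
    ring
  rw [hsplit, hpull, ← hTΔ, ← hTf] at hGzero
  have hfin : fbTransform ν Δ y = -((y^2 : ℝ) • fbTransform ν f y) := by
    linear_combination hGzero
  rw [hfin, ← neg_smul]
end

section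
/- (Failure of the Riemann–Lebesgue lemma for -1 < ν < -1/2.) Let -1 < ν < -1/2 and define f(x) = (2^{ν+1}√π / Γ(-ν-1/2)) · (1-x²)^{-ν-3/2} for 0 < x < 1 and f(x) = 0 for x ≥ 1. Then for every y > 0 the function x ↦ φ_ν(xy) f(x) x^{2ν+1} is absolutely integrable on (0, ∞) and 𝓕_ν f(y) = cos(y). In particular, 𝓕_ν f does not tend to 0 as y → ∞, so the Fourier–Bessel transform of order ν does not have the Riemann–Lebesgue property. -/
open MeasureTheory Filter Set

/-! Auxiliary definitions and lemmas -/

noncomputable def bcoef (ν : ℝ) (n : ℕ) : ℝ :=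
  (-1 : ℝ) ^ n / ((n.factorial : ℝ) * Real.Gamma ((n : ℝ) + ν + 1) * (2:ℝ) ^ (2*(n:ℝ)+ν))

noncomputable def cconst (ν : ℝ) : ℝ :=
  (2:ℝ) ^ (ν + 1) * Real.sqrt Real.pi / Real.Gamma (-ν - 1/2)

noncomputable def Fterm (ν y : ℝ) (n : ℕ) (x : ℝ) : ℝ :=
  (bcoef ν n * y^(2*n) * cconst ν) * (x ^ (2*((n:ℝ)+ν+1)-1) * (1-x^2) ^ (-ν-1/2-1))

noncomputable def Hfun (ν y : ℝ) (x : ℝ) : ℝ :=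
  fbKernel ν (x*y) * (x ^ (2*ν+1) * (cconst ν * (1-x^2) ^ (-ν-1/2-1)))

lemma cconst_pos {ν : ℝ} (hν₂ : ν < -(1/2)) : 0 < cconst ν := by
  have hq : (0:ℝ) < -ν - 1/2 := by linarith
  have := Real.Gamma_pos_of_pos hq
  have := Real.sqrt_pos.mpr Real.pi_pos
  have : (0:ℝ) < (2:ℝ) ^ (ν+1) := Real.rpow_pos_of_pos two_pos _
  unfold cconst
  positivity
lemma realBeta_integrable {p q : ℝ} (hp : 0 < p) (hq : 0 < q) :
    IntegrableOn (fun u : ℝ => u ^ (p-1) * (1-u) ^ (q-1)) (Ioo 0 1) := by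
  have hc := Complex.betaIntegral_convergent (u := (p:ℂ)) (v := (q:ℂ)) (by simpa) (by simpa)
  have h1 : IntegrableOn (fun x : ℝ => (x:ℂ) ^ ((p:ℂ)-1) * (1-(x:ℂ)) ^ ((q:ℂ)-1)) (Ioc 0 1) :=
    (intervalIntegrable_iff_integrableOn_Ioc_of_le zero_le_one).mp hc
  have h2 := (h1.mono_set Ioo_subset_Ioc_self).norm
  refine IntegrableOn.congr_fun h2 (fun x hx => ?_) measurableSet_Ioo
  obtain ⟨hx0, hx1⟩ := hx
  have h1x : (0:ℝ) < 1 - x := by linarith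
  simp only [norm_mul]
  rw [show ((1:ℂ) - (x:ℂ)) = (((1 - x : ℝ)):ℂ) by push_cast; ring]
  rw [Complex.norm_cpow_eq_rpow_re_of_pos hx0,
    Complex.norm_cpow_eq_rpow_re_of_pos h1x]
  norm_num

lemma realBeta_eq {p q : ℝ} (hp : 0 < p) (hq : 0 < q) :
    ∫ u in Ioo (0:ℝ) 1, u ^ (p-1) * (1-u) ^ (q-1)
      = Real.Gamma p * Real.Gamma q / Real.Gamma (p+q) := by
  have key := Complex.Gamma_mul_Gamma_eq_betaIntegral (s := (p:ℂ)) (t := (q:ℂ)) (by simpa) (by simpa)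
  have hbeta : Complex.betaIntegral (p:ℂ) (q:ℂ)
      = ((∫ u in Ioo (0:ℝ) 1, u ^ (p-1) * (1-u) ^ (q-1) : ℝ) : ℂ) := by
    rw [Complex.betaIntegral]
    rw [show (∫ x in (0:ℝ)..1, (x:ℂ) ^ ((p:ℂ)-1) * (1-(x:ℂ)) ^ ((q:ℂ)-1))
        = ∫ x in (0:ℝ)..1, ((x ^ (p-1) * (1-x) ^ (q-1) : ℝ) : ℂ) from ?_]
    · rw [intervalIntegral.integral_ofReal]
      norm_cast
      rw [intervalIntegral.integral_of_le zero_le_one, MeasureTheory.integral_Ioc_eq_integral_Ioo]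
    · apply intervalIntegral.integral_congr_ae
      have hne : ∀ᵐ x : ℝ, x ≠ (1:ℝ) := by
        refine ae_iff.mpr ?_
        simpa using measure_singleton (1:ℝ)
      filter_upwards [hne] with x hx hmem
      rw [Set.uIoc_of_le zero_le_one] at hmem
      obtain ⟨hx0, hx1⟩ := hmem
      have h1x : (0:ℝ) < 1 - x := by
        rcases lt_or_eq_of_le hx1 with h | h
        · linarith
        · exact absurd h hx
      rw [show ((1:ℂ) - (x:ℂ)) = (((1 - x : ℝ)):ℂ) by push_cast; ring]
      rw [Complex.ofReal_mul, Complex.ofReal_cpow hx0.le, Complex.ofReal_cpow h1x.le]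
      push_cast
      ring
  rw [hbeta, show ((p:ℂ)+(q:ℂ)) = ((p+q:ℝ):ℂ) by push_cast; ring, Complex.Gamma_ofReal,
    Complex.Gamma_ofReal, Complex.Gamma_ofReal] at key
  have hG : Real.Gamma (p+q) ≠ 0 := (Real.Gamma_pos_of_pos (by linarith)).ne'
  have : Real.Gamma p * Real.Gamma q
      = Real.Gamma (p+q) * ∫ u in Ioo (0:ℝ) 1, u ^ (p-1) * (1-u) ^ (q-1) := by
    exact_mod_cast key
  rw [this]
  field_simp
lemma realBeta2 {p q : ℝ} (hp : 0 < p) (hq : 0 < q) :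
    IntegrableOn (fun x : ℝ => x ^ (2*p-1) * (1-x^2) ^ (q-1)) (Ioo 0 1) ∧
    ∫ x in Ioo (0:ℝ) 1, x ^ (2*p-1) * (1-x^2) ^ (q-1)
      = Real.Gamma p * Real.Gamma q / (2 * Real.Gamma (p+q)) := by
  set f : ℝ → ℝ := fun u => u ^ (p-1) * (1-u) ^ (q-1) with hf
  set g : ℝ → ℝ := (Ioo (0:ℝ) 1).indicator f with hg
  have hgInt : IntegrableOn g (Ioi 0) := by
    rw [IntegrableOn, integrable_indicator_iff measurableSet_Ioo, IntegrableOn,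
      Measure.restrict_restrict measurableSet_Ioo,
      inter_eq_left.mpr (fun x hx => hx.1)]
    exact realBeta_integrable hp hq
  have claimA : ∀ x ∈ Ioi (0:ℝ), (|(2:ℝ)| * x ^ ((2:ℝ)-1)) • g (x ^ (2:ℝ))
      = (Ioo (0:ℝ) 1).indicator (fun x : ℝ => 2 * (x ^ (2*p-1) * (1-x^2) ^ (q-1))) x := by
    intro x hx
    rw [mem_Ioi] at hx
    have hx2 : x ^ (2:ℝ) = x ^ (2:ℕ) := by
      rw [← Real.rpow_natCast x 2]; norm_num
    have hmem : x ^ (2:ℕ) ∈ Ioo (0:ℝ) 1 ↔ x ∈ Ioo (0:ℝ) 1 := by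
      constructor
      · rintro ⟨h1, h2⟩; exact ⟨hx, by nlinarith⟩
      · rintro ⟨h1, h2⟩; exact ⟨by positivity, by nlinarith⟩
    by_cases hmem2 : x ∈ Ioo (0:ℝ) 1
    · rw [hg, hx2, indicator_of_mem (hmem.mpr hmem2), indicator_of_mem hmem2, hf]
      have e1 : ((x ^ (2:ℕ) : ℝ)) ^ (p-1) = x ^ (2*(p-1)) := by
        rw [← Real.rpow_natCast x 2, ← Real.rpow_mul hx.le]; norm_num
      have e2 : x ^ (2*p-1) = x * x ^ (2*(p-1)) := by
        rw [show 2*p-1 = 1 + 2*(p-1) by ring, Real.rpow_add hx, Real.rpow_one]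
      have e3 : x ^ ((2:ℝ)-1) = x := by norm_num
      simp only [smul_eq_mul, e1, e2, e3, abs_two]
      ring
    · rw [hg, hx2, indicator_of_notMem (fun h => hmem2 (hmem.mp h)),
        indicator_of_notMem hmem2]
      simp
  have hLHSInt : IntegrableOn (fun x : ℝ => (|(2:ℝ)| * x ^ ((2:ℝ)-1)) • g (x ^ (2:ℝ))) (Ioi 0) :=
    (integrableOn_Ioi_comp_rpow_iff g two_ne_zero).mpr hgInt
  have hInd : IntegrableOn
      ((Ioo (0:ℝ) 1).indicator (fun x : ℝ => 2 * (x ^ (2*p-1) * (1-x^2) ^ (q-1)))) (Ioi 0) :=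
    IntegrableOn.congr_fun hLHSInt claimA measurableSet_Ioi
  have hInt2 : IntegrableOn (fun x : ℝ => 2 * (x ^ (2*p-1) * (1-x^2) ^ (q-1))) (Ioo 0 1) := by
    rw [IntegrableOn, integrable_indicator_iff measurableSet_Ioo, IntegrableOn,
      Measure.restrict_restrict measurableSet_Ioo,
      inter_eq_left.mpr (fun x hx => hx.1)] at hInd
    exact hInd
  constructor
  · exact IntegrableOn.congr_fun (hInt2.const_mul (1/2)) (fun x _ => by ring) measurableSet_Ioo
  · have hval : ∫ x in Ioi (0:ℝ), (|(2:ℝ)| * x ^ ((2:ℝ)-1)) • g (x ^ (2:ℝ))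
        = ∫ u in Ioi (0:ℝ), g u := integral_comp_rpow_Ioi g two_ne_zero
    rw [setIntegral_congr_fun measurableSet_Ioi claimA] at hval
    rw [setIntegral_indicator measurableSet_Ioo,
      inter_eq_right.mpr (fun x hx => hx.1)] at hval
    rw [hg, setIntegral_indicator measurableSet_Ioo,
      inter_eq_right.mpr (fun x hx => hx.1), hf] at hval
    rw [realBeta_eq hp hq] at hval
    rw [MeasureTheory.integral_const_mul] at hval
    have h2 : (∫ x in Ioo (0:ℝ) 1, x ^ (2*p-1) * (1-x^2) ^ (q-1))
        = (Real.Gamma p * Real.Gamma q / Real.Gamma (p+q)) / 2 := by linarith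
    rw [h2]; ring
lemma two_rpow_eq (ν : ℝ) (n : ℕ) : (2:ℝ) ^ (2*(n:ℝ)+ν) = 4^n * 2^ν := by
  rw [Real.rpow_add two_pos, show (2*(n:ℝ)) = ((2*n : ℕ) : ℝ) by push_cast; ring,
    Real.rpow_natCast, pow_mul]
  norm_num

lemma fbKernel_series {ν : ℝ} (hν : -1 < ν) {z : ℝ} (hz : 0 < z) :
    fbKernel ν z = ∑' n : ℕ, bcoef ν n * z ^ (2*n) := by
  rw [fbKernel, if_neg hz.ne', besselJ, ← tsum_mul_left]
  refine tsum_congr fun n => ?_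
  have e1 : (z/2) ^ (2*(n:ℝ)+ν) = z ^ (2*(n:ℝ)+ν) / 2 ^ (2*(n:ℝ)+ν) :=
    Real.div_rpow hz.le (by norm_num) _
  have e2 : z ^ (-ν) * z ^ (2*(n:ℝ)+ν) = z ^ (2*n) := by
    rw [← Real.rpow_add hz, show -ν + (2*(n:ℝ)+ν) = ((2*n : ℕ) : ℝ) by push_cast; ring,
      Real.rpow_natCast]
  rw [e1, bcoef]
  rw [show z ^ (-ν) * ((-1:ℝ)^n / ((n.factorial : ℝ) * Real.Gamma ((n:ℝ)+ν+1))
        * (z ^ (2*(n:ℝ)+ν) / (2:ℝ) ^ (2*(n:ℝ)+ν)))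
      = ((-1:ℝ)^n / ((n.factorial : ℝ) * Real.Gamma ((n:ℝ)+ν+1) * (2:ℝ) ^ (2*(n:ℝ)+ν)))
        * (z ^ (-ν) * z ^ (2*(n:ℝ)+ν)) by ring, e2]

lemma gamma_ge_one {ν : ℝ} (hν : -1 < ν) (n : ℕ) :
    (1:ℝ) ≤ Real.Gamma ((n:ℝ)+2+ν+1) := by
  have h2 : (2:ℝ) < (n:ℝ)+2+ν+1 := by
    have : (0:ℝ) ≤ (n:ℝ) := Nat.cast_nonneg n
    linarith
  have h := (Real.Gamma_strictMonoOn_Ici (Set.mem_Ici.mpr (le_refl (2:ℝ))) (Set.mem_Ici.mpr (by linarith : (2:ℝ) ≤ (n:ℝ)+2+ν+1)) h2).le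
  rwa [Real.Gamma_two] at h

lemma bcoef_abs {ν : ℝ} (hν : -1 < ν) (n : ℕ) :
    |bcoef ν n| = 1 / ((n.factorial : ℝ) * Real.Gamma ((n:ℝ)+ν+1) * (2:ℝ) ^ (2*(n:ℝ)+ν)) := by
  have h1 : (0:ℝ) < (n.factorial : ℝ) := by positivity
  have h2 : (0:ℝ) < Real.Gamma ((n:ℝ)+ν+1) := by
    apply Real.Gamma_pos_of_pos
    have : (0:ℝ) ≤ (n:ℝ) := Nat.cast_nonneg n
    linarith
  have h3 : (0:ℝ) < (2:ℝ) ^ (2*(n:ℝ)+ν) := Real.rpow_pos_of_pos two_pos _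
  rw [bcoef, abs_div, abs_pow, abs_neg, abs_one, one_pow, abs_of_pos (by positivity)]

lemma summable_bcoef {ν : ℝ} (hν : -1 < ν) (y : ℝ) :
    Summable (fun n : ℕ => |bcoef ν n| * y ^ (2*n)) := by
  rw [← summable_nat_add_iff 2]
  have hsum : Summable (fun n : ℕ => (2:ℝ)^(-ν) * ((y^2/4) ^ (n+2) / (n+2).factorial)) := by
    apply Summable.mul_left
    exact (summable_nat_add_iff 2).mpr (Real.summable_pow_div_factorial (y^2/4))
  apply Summable.of_nonneg_of_le
    (fun n => mul_nonneg (abs_nonneg _) (by rw [pow_mul]; positivity)) (fun n => ?_) hsum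
  set m := n + 2 with hm
  have h1 : (0:ℝ) < (m.factorial : ℝ) := by positivity
  have h2 : (1:ℝ) ≤ Real.Gamma ((m:ℝ)+ν+1) := by
    have := gamma_ge_one hν n
    rw [show ((n:ℝ)+2+ν+1) = ((m:ℝ)+ν+1) by rw [hm]; push_cast; ring] at this
    exact this
  rw [bcoef_abs hν, two_rpow_eq]
  rw [show y ^ (2*m) = (y^2)^m by rw [pow_mul]]
  rw [show (2:ℝ)^(-ν) * ((y^2/4) ^ m / (m.factorial : ℝ))
      = (y^2)^m / ((m.factorial : ℝ) * (4^m * 2^ν)) by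
    rw [div_pow, Real.rpow_neg (by norm_num : (0:ℝ) ≤ 2),
      show (y^2)^m / (4:ℝ)^m / (m.factorial:ℝ) = (y^2)^m / ((4:ℝ)^m * (m.factorial:ℝ)) from
        div_div _ _ _,
      inv_mul_eq_div, div_div]
    congr 1
    ring]
  rw [div_mul_eq_mul_div, one_mul]
  apply div_le_div_of_nonneg_left ?_ (by positivity) ?_
  · positivity
  · calc (m.factorial : ℝ) * (4^m * 2^ν) = (m.factorial : ℝ) * 1 * (4^m * 2^ν) := by ring
      _ ≤ (m.factorial : ℝ) * Real.Gamma ((m:ℝ)+ν+1) * (4^m * 2^ν) := by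
          apply mul_le_mul_of_nonneg_right ?_ (by positivity)
          apply mul_le_mul_of_nonneg_left h2 h1.le
lemma dup_fact (n : ℕ) :
    Real.Gamma ((n:ℝ)+1/2) * (n.factorial:ℝ) * (4:ℝ)^n
      = ((2*n).factorial : ℝ) * Real.sqrt Real.pi := by
  have dup := Real.Gamma_mul_Gamma_add_half ((n:ℝ)+1/2)
  rw [show (n:ℝ)+1/2+1/2 = (n:ℝ)+1 by ring, Real.Gamma_nat_eq_factorial,
    show 2*((n:ℝ)+1/2) = ((2*n:ℕ):ℝ)+1 by push_cast; ring, Real.Gamma_nat_eq_factorial,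
    show (1:ℝ) - (((2*n:ℕ):ℝ)+1) = -(((2*n:ℕ)):ℝ) by ring,
    Real.rpow_neg (by norm_num : (0:ℝ) ≤ 2), Real.rpow_natCast, pow_mul] at dup
  norm_num at dup
  rw [dup]
  field_simp

lemma keyid {ν : ℝ} (hν₁ : -1 < ν) (hν₂ : ν < -(1/2)) (y : ℝ) (n : ℕ) :
    (bcoef ν n * y^(2*n) * cconst ν) *
      (Real.Gamma ((n:ℝ)+ν+1) * Real.Gamma (-ν-1/2) / (2 * Real.Gamma (((n:ℝ)+ν+1) + (-ν-1/2))))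
    = (-1)^n * y^(2*n) / (2*n).factorial := by
  simp only [cconst]
  have hq : (0:ℝ) < -ν-1/2 := by linarith
  have hA : ((n.factorial : ℝ)) ≠ 0 := by positivity
  have hB : Real.Gamma ((n:ℝ)+ν+1) ≠ 0 := by
    refine (Real.Gamma_pos_of_pos ?_).ne'
    have : (0:ℝ) ≤ (n:ℝ) := Nat.cast_nonneg n
    linarith
  have hC : ((4:ℝ)^n) ≠ 0 := by positivity
  have hD : ((2:ℝ)^ν) ≠ 0 := (Real.rpow_pos_of_pos two_pos ν).ne'
  have hE : Real.Gamma ((n:ℝ)+1/2) ≠ 0 := by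
    refine (Real.Gamma_pos_of_pos ?_).ne'
    have : (0:ℝ) ≤ (n:ℝ) := Nat.cast_nonneg n
    linarith
  have hG : Real.Gamma (-ν-1/2) ≠ 0 := (Real.Gamma_pos_of_pos hq).ne'
  have hS : Real.sqrt Real.pi ≠ 0 := (Real.sqrt_pos.mpr Real.pi_pos).ne'
  have hF2 : (((2*n).factorial : ℝ)) ≠ 0 := by positivity
  have hdup := dup_fact n
  rw [show ((n:ℝ)+ν+1) + (-ν-1/2) = (n:ℝ)+1/2 by ring, bcoef, two_rpow_eq,
    show (2:ℝ)^(ν+1) = 2^ν * 2 by rw [Real.rpow_add two_pos, Real.rpow_one]]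
  set A := (n.factorial : ℝ) with hAdef
  set B := Real.Gamma ((n:ℝ)+ν+1) with hBdef
  set E := Real.Gamma ((n:ℝ)+1/2) with hEdef
  set G := Real.Gamma (-ν-1/2) with hGdef
  set S := Real.sqrt Real.pi with hSdef
  set F2 := (((2*n).factorial : ℝ)) with hF2def
  set C := ((4:ℝ)^n) with hCdef
  set D := ((2:ℝ)^ν) with hDdef
  set Y := y^(2*n) with hYdef
  have L1 : ((-1:ℝ)^n/(A*B*(C*D)) * Y * (D*2*S/G)) * (B*G/(2*E))
      = (-1)^n * Y * S / (E*A*C) := by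
    field_simp
  rw [L1, hdup]
  field_simp

section CoreLemmas

variable {ν y : ℝ}

lemma npos (ν : ℝ) (hν₁ : -1 < ν) (n : ℕ) : (0:ℝ) < (n:ℝ) + ν + 1 := by
  have : (0:ℝ) ≤ (n:ℝ) := Nat.cast_nonneg n
  linarith

lemma Fterm_integrableOn (hν₁ : -1 < ν) (hν₂ : ν < -(1/2)) (y : ℝ) (n : ℕ) :
    IntegrableOn (Fterm ν y n) (Ioo 0 1) := by
  have hq : (0:ℝ) < -ν - 1/2 := by linarith
  exact ((realBeta2 (npos ν hν₁ n) hq).1).const_mul _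

lemma Fterm_norm_eq (hν₁ : -1 < ν) (hν₂ : ν < -(1/2)) (hy : 0 < y) (n : ℕ) :
    ∀ x ∈ Ioo (0:ℝ) 1, ‖Fterm ν y n x‖
      = (|bcoef ν n| * y^(2*n) * cconst ν) * (x ^ (2*((n:ℝ)+ν+1)-1) * (1-x^2) ^ (-ν-1/2-1)) := by
  intro x hx
  obtain ⟨hx0, hx1⟩ := hx
  have h1 : (0:ℝ) < 1 - x^2 := by nlinarith
  have hw : (0:ℝ) < x ^ (2*((n:ℝ)+ν+1)-1) * (1-x^2) ^ (-ν-1/2-1) := by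
    have := Real.rpow_pos_of_pos hx0 (2*((n:ℝ)+ν+1)-1)
    have := Real.rpow_pos_of_pos h1 (-ν-1/2-1)
    positivity
  rw [Fterm, Real.norm_eq_abs, abs_mul, abs_of_pos hw, abs_mul, abs_mul,
    abs_of_pos (cconst_pos hν₂), abs_of_pos (pow_pos hy _)]

lemma Fterm_integral (hν₁ : -1 < ν) (hν₂ : ν < -(1/2)) (y : ℝ) (n : ℕ) :
    ∫ x in Ioo (0:ℝ) 1, Fterm ν y n x = (-1)^n * y^(2*n) / (2*n).factorial := by
  have hq : (0:ℝ) < -ν - 1/2 := by linarith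
  simp only [Fterm]
  rw [MeasureTheory.integral_const_mul, (realBeta2 (npos ν hν₁ n) hq).2]
  exact keyid hν₁ hν₂ y n

lemma neg_one_pow_sq (n : ℕ) : ((-1:ℝ)^n) * ((-1:ℝ)^n) = 1 := by
  rw [← pow_add]
  exact Even.neg_one_pow ⟨n, by ring⟩

lemma Fterm_norm_integral (hν₁ : -1 < ν) (hν₂ : ν < -(1/2)) (hy : 0 < y) (n : ℕ) :
    ∫ x in Ioo (0:ℝ) 1, ‖Fterm ν y n x‖ = y^(2*n) / (2*n).factorial := by
  have hq : (0:ℝ) < -ν - 1/2 := by linarith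
  rw [setIntegral_congr_fun measurableSet_Ioo (Fterm_norm_eq hν₁ hν₂ hy n)]
  rw [MeasureTheory.integral_const_mul, (realBeta2 (npos ν hν₁ n) hq).2]
  have habs : |bcoef ν n| = (-1:ℝ)^n * bcoef ν n := by
    rw [bcoef_abs hν₁, bcoef, ← mul_div_assoc, neg_one_pow_sq]
  rw [habs, show ((-1:ℝ)^n * bcoef ν n * y^(2*n) * cconst ν) *
      (Real.Gamma ((n:ℝ)+ν+1) * Real.Gamma (-ν-1/2) / (2 * Real.Gamma (((n:ℝ)+ν+1) + (-ν-1/2))))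
    = (-1:ℝ)^n * ((bcoef ν n * y^(2*n) * cconst ν) *
      (Real.Gamma ((n:ℝ)+ν+1) * Real.Gamma (-ν-1/2) / (2 * Real.Gamma (((n:ℝ)+ν+1) + (-ν-1/2)))))
    by ring, keyid hν₁ hν₂ y n,
    show (-1:ℝ)^n * ((-1)^n * y^(2*n) / (2*n).factorial)
      = ((-1:ℝ)^n * (-1)^n) * y^(2*n) / (2*n).factorial by ring, neg_one_pow_sq, one_mul]

lemma Fterm_summable_norm_integral (hν₁ : -1 < ν) (hν₂ : ν < -(1/2)) (hy : 0 < y) :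
    Summable (fun n => ∫ x in Ioo (0:ℝ) 1, ‖Fterm ν y n x‖) := by
  have base : Summable (fun n : ℕ => y^(2*n) / (2*n).factorial) := by
    apply Summable.of_nonneg_of_le (fun n => by positivity)
      (fun n => ?_) (Real.summable_pow_div_factorial (y^2))
    rw [pow_mul]
    exact div_le_div_of_nonneg_left (by positivity) (by positivity)
      (by exact_mod_cast Nat.factorial_le (by omega))
  exact base.congr (fun n => (Fterm_norm_integral hν₁ hν₂ hy n).symm)

lemma Fterm_hasSum (hν₁ : -1 < ν) (hy : 0 < y) {x : ℝ} (hx : x ∈ Ioo (0:ℝ) 1) :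
    HasSum (fun n => Fterm ν y n x) (Hfun ν y x) := by
  obtain ⟨hx0, hx1⟩ := hx
  have hxy : 0 < x*y := mul_pos hx0 hy
  have hsum : Summable (fun n => bcoef ν n * (x*y)^(2*n)) := by
    apply Summable.of_abs
    apply Summable.of_nonneg_of_le (fun n => abs_nonneg _) (fun n => ?_) (summable_bcoef hν₁ y)
    rw [abs_mul]
    apply mul_le_mul_of_nonneg_left ?_ (abs_nonneg _)
    rw [abs_pow]
    have hle : |x*y| ≤ y := by rw [abs_of_pos hxy]; nlinarith
    exact pow_le_pow_left₀ (abs_nonneg _) hle _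
  have h1 : HasSum
      (fun n => bcoef ν n * (x*y)^(2*n) * (x ^ (2*ν+1) * (cconst ν * (1-x^2) ^ (-ν-1/2-1))))
      (fbKernel ν (x*y) * (x ^ (2*ν+1) * (cconst ν * (1-x^2) ^ (-ν-1/2-1)))) := by
    rw [fbKernel_series hν₁ hxy]
    exact (hsum.hasSum).mul_right _
  have hfe : (fun n => bcoef ν n * (x*y)^(2*n) * (x ^ (2*ν+1) * (cconst ν * (1-x^2) ^ (-ν-1/2-1))))
      = fun n => Fterm ν y n x := by
    funext n
    rw [Fterm, mul_pow]
    rw [show x ^ (2*((n:ℝ)+ν+1)-1) = x^(2*n) * x ^ (2*ν+1) by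
      rw [← Real.rpow_natCast x (2*n), ← Real.rpow_add hx0]
      congr 1; push_cast; ring]
    ring
  rw [← hfe, Hfun]
  exact h1

end CoreLemmas

section HfunLemmas

variable {ν y : ℝ}

lemma Hfun_integrableOn (hν₁ : -1 < ν) (hν₂ : ν < -(1/2)) (hy : 0 < y) :
    IntegrableOn (Hfun ν y) (Ioo 0 1) := by
  have hq : (0:ℝ) < -ν - 1/2 := by linarith
  have hν1' : (0:ℝ) < ν + 1 := by linarith
  have hMs : Summable (fun n => |bcoef ν n| * y^(2*n)) := summable_bcoef hν₁ y
  set M : ℝ := ∑' n, |bcoef ν n| * y^(2*n) with hMdef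
  set μ := volume.restrict (Ioo (0:ℝ) 1) with hmu
  set F : ℕ → ℝ → ℝ := fun N x => ∑ n ∈ Finset.range N, Fterm ν y n x with hF
  have F_meas : ∀ N, AEStronglyMeasurable (F N) μ := fun N =>
    (integrable_finset_sum _ (fun n _ => Fterm_integrableOn hν₁ hν₂ y n)).aestronglyMeasurable
  have bound_int : Integrable
      (fun x => (cconst ν * M) * (x ^ (2*(ν+1)-1) * (1-x^2) ^ (-ν-1/2-1))) μ :=
    ((realBeta2 hν1' hq).1).const_mul _
  have h_lim : ∀ᵐ x ∂μ, Tendsto (fun N => F N x) atTop (nhds (Hfun ν y x)) := by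
    rw [ae_restrict_iff' measurableSet_Ioo]
    filter_upwards with x hx
    exact (Fterm_hasSum hν₁ hy hx).tendsto_sum_nat
  have h_bound : ∀ N, ∀ᵐ x ∂μ,
      ‖F N x‖ ≤ (cconst ν * M) * (x ^ (2*(ν+1)-1) * (1-x^2) ^ (-ν-1/2-1)) := by
    intro N
    rw [ae_restrict_iff' measurableSet_Ioo]
    filter_upwards with x hx
    simp only [hF]
    obtain ⟨hx0, hx1⟩ := hx
    have h1 : (0:ℝ) < 1 - x^2 := by nlinarith
    have hwpos : (0:ℝ) < x ^ (2*(ν+1)-1) * (1-x^2) ^ (-ν-1/2-1) := by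
      have := Real.rpow_pos_of_pos hx0 (2*(ν+1)-1)
      have := Real.rpow_pos_of_pos h1 (-ν-1/2-1)
      positivity
    calc ‖∑ n ∈ Finset.range N, Fterm ν y n x‖
        ≤ ∑ n ∈ Finset.range N, ‖Fterm ν y n x‖ := norm_sum_le _ _
      _ ≤ ∑ n ∈ Finset.range N, (|bcoef ν n| * y^(2*n)) *
            (cconst ν * (x ^ (2*(ν+1)-1) * (1-x^2) ^ (-ν-1/2-1))) := by
          apply Finset.sum_le_sum
          intro n _
          rw [Fterm_norm_eq hν₁ hν₂ hy n x ⟨hx0, hx1⟩]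
          have hsplit : x ^ (2*((n:ℝ)+ν+1)-1) = x^(2*n) * x ^ (2*(ν+1)-1) := by
            rw [← Real.rpow_natCast x (2*n), ← Real.rpow_add hx0]
            congr 1; push_cast; ring
          have hxle : x^(2*n) ≤ 1 := pow_le_one₀ hx0.le hx1.le
          have hCnn : (0:ℝ) ≤ |bcoef ν n| * y^(2*n) * cconst ν :=
            mul_nonneg (mul_nonneg (abs_nonneg _) (pow_nonneg hy.le _)) (cconst_pos hν₂).le
          rw [hsplit]
          calc (|bcoef ν n| * y^(2*n) * cconst ν) *
                ((x^(2*n) * x ^ (2*(ν+1)-1)) * (1-x^2) ^ (-ν-1/2-1))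
              = (|bcoef ν n| * y^(2*n) * cconst ν) *
                (x^(2*n) * (x ^ (2*(ν+1)-1) * (1-x^2) ^ (-ν-1/2-1))) := by ring
            _ ≤ (|bcoef ν n| * y^(2*n) * cconst ν) *
                (x ^ (2*(ν+1)-1) * (1-x^2) ^ (-ν-1/2-1)) :=
                mul_le_mul_of_nonneg_left (mul_le_of_le_one_left hwpos.le hxle) hCnn
            _ = (|bcoef ν n| * y^(2*n)) *
                (cconst ν * (x ^ (2*(ν+1)-1) * (1-x^2) ^ (-ν-1/2-1))) := by ring
      _ = (∑ n ∈ Finset.range N, (|bcoef ν n| * y^(2*n))) *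
            (cconst ν * (x ^ (2*(ν+1)-1) * (1-x^2) ^ (-ν-1/2-1))) := by
          rw [Finset.sum_mul]
      _ ≤ M * (cconst ν * (x ^ (2*(ν+1)-1) * (1-x^2) ^ (-ν-1/2-1))) := by
          have hc := cconst_pos hν₂
          apply mul_le_mul_of_nonneg_right ?_ (by positivity)
          exact hMs.sum_le_tsum _ (fun n _ => mul_nonneg (abs_nonneg _) (pow_nonneg hy.le _))
      _ = (cconst ν * M) * (x ^ (2*(ν+1)-1) * (1-x^2) ^ (-ν-1/2-1)) := by ring
  exact ⟨aestronglyMeasurable_of_tendsto_ae _ F_meas h_lim,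
    hasFiniteIntegral_of_dominated_convergence bound_int.hasFiniteIntegral h_bound h_lim⟩

end HfunLemmas

lemma Hfun_integral {ν y : ℝ} (hν₁ : -1 < ν) (hν₂ : ν < -(1/2)) (hy : 0 < y) :
    ∫ x in Ioo (0:ℝ) 1, Hfun ν y x = Real.cos y := by
  have hHasSum := MeasureTheory.hasSum_integral_of_summable_integral_norm
    (μ := volume.restrict (Ioo (0:ℝ) 1)) (F := fun n x => Fterm ν y n x)
    (fun n => Fterm_integrableOn hν₁ hν₂ y n) (Fterm_summable_norm_integral hν₁ hν₂ hy)
  have htsum_eq : (∫ x in Ioo (0:ℝ) 1, ∑' n, Fterm ν y n x) = ∫ x in Ioo (0:ℝ) 1, Hfun ν y x := by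
    apply integral_congr_ae
    rw [EventuallyEq, ae_restrict_iff' measurableSet_Ioo]
    filter_upwards with x hx
    exact (Fterm_hasSum hν₁ hy hx).tsum_eq
  rw [htsum_eq] at hHasSum
  have hfe : (fun n => ∫ x in Ioo (0:ℝ) 1, Fterm ν y n x)
      = fun n => (-1:ℝ)^n * y^(2*n) / (2*n).factorial := funext (Fterm_integral hν₁ hν₂ y)
  rw [hfe] at hHasSum
  exact hHasSum.unique (Real.hasSum_cos y)

theorem stmt9 (ν : ℝ) (hν₁ : -1 < ν) (hν₂ : ν < -(1/2))
    (f : ℝ → ℂ)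
    (hfdef : ∀ x : ℝ, f x =
      if 0 < x ∧ x < 1 then
        (((2 : ℝ) ^ (ν + 1) * Real.sqrt Real.pi / Real.Gamma (-ν - 1/2) *
          (1 - x ^ 2) ^ (-ν - 3/2) : ℝ) : ℂ)
      else 0) :
    (∀ y > (0 : ℝ),
      IntegrableOn (fun x => (fbKernel ν (x * y) * x ^ (2 * ν + 1)) • f x) (Ioi 0) ∧
      fbTransform ν f y = (Real.cos y : ℂ)) ∧
    ¬ Tendsto (fbTransform ν f) atTop (nhds 0) := by
  have main : ∀ y : ℝ, 0 < y →
      IntegrableOn (fun x => (fbKernel ν (x * y) * x ^ (2 * ν + 1)) • f x) (Ioi 0) ∧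
      fbTransform ν f y = (Real.cos y : ℂ) := by
    intro y hy
    have hGeq : EqOn (fun x => (fbKernel ν (x * y) * x ^ (2 * ν + 1)) • f x)
        (fun x => (((Ioo (0:ℝ) 1).indicator (Hfun ν y) x : ℝ) : ℂ)) (Ioi 0) := by
      intro x hx
      simp only
      rw [hfdef x]
      by_cases hmem : x ∈ Ioo (0:ℝ) 1
      · rw [indicator_of_mem hmem, if_pos (⟨hmem.1, hmem.2⟩ : 0 < x ∧ x < 1)]
        rw [Complex.real_smul, ← Complex.ofReal_mul]
        norm_cast
        simp only [Hfun, cconst]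
        rw [show (-ν-1/2-1:ℝ) = -ν-3/2 by ring]
        ring
      · rw [indicator_of_notMem hmem, if_neg (fun h => hmem ⟨h.1, h.2⟩)]
        simp
    have hindInt : Integrable ((Ioo (0:ℝ) 1).indicator (Hfun ν y)) volume :=
      (integrable_indicator_iff measurableSet_Ioo).mpr (Hfun_integrableOn hν₁ hν₂ hy)
    constructor
    · exact IntegrableOn.congr_fun (hindInt.ofReal.integrableOn)
        (fun x hx => (hGeq hx).symm) measurableSet_Ioi
    · rw [fbTransform, setIntegral_congr_fun measurableSet_Ioi hGeq]
      have hIO : (∫ x in Ioi (0:ℝ), (((Ioo (0:ℝ) 1).indicator (Hfun ν y) x : ℝ) : ℂ))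
          = (((∫ x in Ioi (0:ℝ), (Ioo (0:ℝ) 1).indicator (Hfun ν y) x) : ℝ) : ℂ) :=
        integral_ofReal
      rw [hIO, setIntegral_indicator measurableSet_Ioo,
        inter_eq_right.mpr Ioo_subset_Ioi_self,
        Hfun_integral hν₁ hν₂ hy]
  refine ⟨fun y hy => main y hy, ?_⟩
  intro hT
  have hu : Tendsto (fun k : ℕ => ((k:ℝ)+1) * (2*Real.pi)) atTop atTop := by
    apply Tendsto.atTop_mul_const (by positivity : (0:ℝ) < 2*Real.pi)
    exact tendsto_atTop_add_const_right _ 1 tendsto_natCast_atTop_atTop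
  have h2 := hT.comp hu
  have h3 : (fun k : ℕ => fbTransform ν f (((k:ℝ)+1) * (2*Real.pi))) = fun _ => (1:ℂ) := by
    funext k
    have hpos : (0:ℝ) < ((k:ℝ)+1) * (2*Real.pi) := by positivity
    rw [(main _ hpos).2]
    rw [show ((k:ℝ)+1) * (2*Real.pi) = ((k+1 : ℕ):ℝ) * (2*Real.pi) by push_cast; ring,
      Real.cos_nat_mul_two_pi]
    norm_num
  have h4 : Tendsto (fun _ : ℕ => (1:ℂ)) atTop (nhds 0) := by
    rw [← h3]; exact h2
  exact zero_ne_one (tendsto_nhds_unique h4 tendsto_const_nhds)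
end

section
/- Let (X, μ) be a measure space and H = L²(X, μ; ℂ), and let (φ_n)_{n ∈ ℕ} be an orthonormal basis of H. Let S be a subspace of L¹(X, μ; ℂ) ∩ L²(X, μ; ℂ) that contains every φ_n and is dense in H in the L² norm, and let T : S → H be a linear map. Assume: (i) for each n there exists θ_n ∈ ℝ such that conj(φ_n(x)) = e^{iθ_n} φ_n(x) for μ-almost every x; (ii) T φ_n = λ_n φ_n with |λ_n| = 1 for every n; (iii) (Fubini property) ∫_X (Tf)(x) g(x) dμ(x) = ∫_X f(x) (Tg)(x) dμ(x) for all f, g ∈ S. Then ‖Tf‖ = ‖f‖ for every f ∈ S, and T extends uniquely to a unitary operator on H. -/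
open MeasureTheory Filter Set

local notation "⟪" x ", " y "⟫" => @inner ℂ _ _ x y

theorem stmt11 {X : Type*} [MeasurableSpace X] (μ : Measure X)
    (φ : ℕ → X → ℂ) (hφ1 : ∀ n, MemLp (φ n) 1 μ) (hφ2 : ∀ n, MemLp (φ n) 2 μ)
    (horth : ∀ m n, (∫ x, φ m x * (starRingEnd ℂ) (φ n x) ∂μ) = if m = n then 1 else 0)
    (hbasis : Dense
      (Submodule.span ℂ (Set.range fun n => (hφ2 n).toLp (φ n)) : Set (Lp ℂ 2 μ)))
    (S : Set (X → ℂ))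
    (hS1 : ∀ f ∈ S, MemLp f 1 μ) (hS2 : ∀ f ∈ S, MemLp f 2 μ)
    (hSφ : ∀ n, φ n ∈ S)
    (hSadd : ∀ f ∈ S, ∀ g ∈ S, f + g ∈ S)
    (hSsmul : ∀ (c : ℂ), ∀ f ∈ S, c • f ∈ S)
    (hSdense : ∀ g : Lp ℂ 2 μ, ∀ ε > (0 : ℝ), ∃ f, ∃ hf : f ∈ S,
      ‖g - (hS2 f hf).toLp f‖ < ε)
    (T : (X → ℂ) → (X → ℂ))
    (hT2 : ∀ f ∈ S, MemLp (T f) 2 μ)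
    (hTadd : ∀ f ∈ S, ∀ g ∈ S, T (f + g) =ᵐ[μ] T f + T g)
    (hTsmul : ∀ (c : ℂ), ∀ f ∈ S, T (c • f) =ᵐ[μ] c • T f)
    (θ : ℕ → ℝ)
    (hconj : ∀ n, (fun x => (starRingEnd ℂ) (φ n x))
      =ᵐ[μ] fun x => Complex.exp ((θ n : ℂ) * Complex.I) * φ n x)
    (lam : ℕ → ℂ) (hlam : ∀ n, ‖lam n‖ = 1)
    (heig : ∀ n, T (φ n) =ᵐ[μ] lam n • φ n)
    (hfub : ∀ f ∈ S, ∀ g ∈ S, (∫ x, T f x * g x ∂μ) = ∫ x, f x * T g x ∂μ) :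
    (∀ f ∈ S, eLpNorm (T f) 2 μ = eLpNorm f 2 μ) ∧
    ∃! U : Lp ℂ 2 μ ≃ₗᵢ[ℂ] Lp ℂ 2 μ,
      ∀ f, ∀ hf : f ∈ S, U ((hS2 f hf).toLp f) = (hT2 f hf).toLp (T f) := by
  set e : ℕ → Lp ℂ 2 μ := fun n => (hφ2 n).toLp (φ n) with he
  -- inner products of toLp's as integrals
  have inner_toLp : ∀ (f g : X → ℂ) (hf : MemLp f 2 μ) (hg : MemLp g 2 μ),
      ⟪hf.toLp f, hg.toLp g⟫ = ∫ x, (starRingEnd ℂ) (f x) * g x ∂μ := by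
    intro f g hf hg
    rw [MeasureTheory.L2.inner_def]
    apply integral_congr_ae
    filter_upwards [hf.coeFn_toLp, hg.coeFn_toLp] with x hx hy
    rw [hx, hy, RCLike.inner_apply, mul_comm]
  -- orthonormality of e
  have honb : Orthonormal ℂ e := by
    rw [orthonormal_iff_ite]
    intro m n
    rw [inner_toLp]
    have : (∫ x, (starRingEnd ℂ) (φ m x) * φ n x ∂μ)
        = (starRingEnd ℂ) (∫ x, φ m x * (starRingEnd ℂ) (φ n x) ∂μ) := by
      rw [← integral_conj]
      congr 1; funext x; simp [mul_comm]
    rw [this, horth]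
    split <;> simp
  have hsp : ⊤ ≤ (Submodule.span ℂ (Set.range e)).topologicalClosure := by
    intro x _
    have hx : x ∈ closure (Submodule.span ℂ (Set.range e) : Set (Lp ℂ 2 μ)) := hbasis x
    rwa [← Submodule.topologicalClosure_coe] at hx
  set b : HilbertBasis ℕ ℂ (Lp ℂ 2 μ) := HilbertBasis.mk honb hsp with hb
  have hcoe : (b : ℕ → Lp ℂ 2 μ) = e := by rw [hb]; exact HilbertBasis.coe_mk honb hsp
  have hrep : ∀ (x : Lp ℂ 2 μ) (n : ℕ), (b.repr x : ℕ → ℂ) n = ⟪e n, x⟫ := by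
    intro x n
    rw [HilbertBasis.repr_apply_apply]
    exact congrArg (fun y => ⟪y, x⟫) (congrFun hcoe n)
  -- scaled family
  have hlam0 : ∀ n, lam n ≠ 0 := by
    intro n h
    have := hlam n
    rw [h, norm_zero] at this
    norm_num at this
  set e' : ℕ → Lp ℂ 2 μ := fun n => lam n • e n with he'
  have hconjlam : ∀ n, lam n * (starRingEnd ℂ) (lam n) = 1 := by
    intro n; rw [Complex.mul_conj', hlam n]; norm_num
  have hconjlam' : ∀ n, (starRingEnd ℂ) (lam n) * lam n = 1 := by
    intro n; rw [mul_comm]; exact hconjlam n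
  have honb' : Orthonormal ℂ e' := by
    rw [orthonormal_iff_ite]
    intro m n
    rw [he']
    simp only [inner_smul_left, inner_smul_right]
    rw [orthonormal_iff_ite.mp honb m n]
    split
    · next h => subst h; rw [mul_one]; exact hconjlam m
    · simp
  have hspan' : Submodule.span ℂ (Set.range e') = Submodule.span ℂ (Set.range e) := by
    apply le_antisymm <;> rw [Submodule.span_le] <;> rintro _ ⟨n, rfl⟩
    · exact Submodule.smul_mem _ _ (Submodule.subset_span ⟨n, rfl⟩)
    · have : e n = (lam n)⁻¹ • e' n := by
        rw [he']; rw [smul_smul, inv_mul_cancel₀ (hlam0 n), one_smul]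
      rw [this]
      exact Submodule.smul_mem _ _ (Submodule.subset_span ⟨n, rfl⟩)
  have hsp' : ⊤ ≤ (Submodule.span ℂ (Set.range e')).topologicalClosure := by
    rw [hspan']; exact hsp
  set b' : HilbertBasis ℕ ℂ (Lp ℂ 2 μ) := HilbertBasis.mk honb' hsp' with hb'
  have hcoe' : (b' : ℕ → Lp ℂ 2 μ) = e' := by rw [hb']; exact HilbertBasis.coe_mk honb' hsp'
  have hrep' : ∀ (x : Lp ℂ 2 μ) (n : ℕ), (b'.repr x : ℕ → ℂ) n = ⟪e' n, x⟫ := by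
    intro x n
    rw [HilbertBasis.repr_apply_apply]
    exact congrArg (fun y => ⟪y, x⟫) (congrFun hcoe' n)
  set U : Lp ℂ 2 μ ≃ₗᵢ[ℂ] Lp ℂ 2 μ := b.repr.trans b'.repr.symm with hU
  -- coefficients of U g
  have hUcoeff : ∀ (g : Lp ℂ 2 μ) (n : ℕ), ⟪e n, U g⟫ = lam n * ⟪e n, g⟫ := by
    intro g n
    have h1 : b'.repr (U g) = b.repr g := by
      rw [hU]; simp
    have h2 : (b'.repr (U g) : ℕ → ℂ) n = (b.repr g : ℕ → ℂ) n := by rw [h1]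
    rw [hrep', hrep, he'] at h2
    rw [inner_smul_left] at h2
    calc ⟪e n, U g⟫ = lam n * ((starRingEnd ℂ) (lam n) * ⟪e n, U g⟫) := by
          rw [← mul_assoc, hconjlam, one_mul]
      _ = lam n * ⟪e n, g⟫ := by rw [h2]
  -- key coefficient identity for T
  have hkey : ∀ (f : X → ℂ) (hf : f ∈ S) (n : ℕ),
      ⟪e n, (hT2 f hf).toLp (T f)⟫ = lam n * ⟪e n, (hS2 f hf).toLp f⟫ := by
    intro f hf n
    rw [he]
    rw [inner_toLp, inner_toLp]
    have h1 : (∫ x, (starRingEnd ℂ) (φ n x) * T f x ∂μ)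
        = Complex.exp ((θ n : ℂ) * Complex.I) * ∫ x, φ n x * T f x ∂μ := by
      rw [← smul_eq_mul, ← integral_smul]
      apply integral_congr_ae
      filter_upwards [hconj n] with x hx
      rw [hx]; simp [smul_eq_mul]; ring
    have h2 : (∫ x, φ n x * T f x ∂μ) = lam n * ∫ x, φ n x * f x ∂μ := by
      rw [← hfub (φ n) (hSφ n) f hf]
      rw [← smul_eq_mul, ← integral_smul]
      apply integral_congr_ae
      filter_upwards [heig n] with x hx
      rw [hx]; simp [smul_eq_mul]; ring
    have h3 : (∫ x, (starRingEnd ℂ) (φ n x) * f x ∂μ)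
        = Complex.exp ((θ n : ℂ) * Complex.I) * ∫ x, φ n x * f x ∂μ := by
      rw [← smul_eq_mul, ← integral_smul]
      apply integral_congr_ae
      filter_upwards [hconj n] with x hx
      rw [hx]; simp [smul_eq_mul]; ring
    rw [h1, h2, h3]; ring
  -- U maps toLp f to toLp (T f)
  have hUT : ∀ (f : X → ℂ) (hf : f ∈ S),
      U ((hS2 f hf).toLp f) = (hT2 f hf).toLp (T f) := by
    intro f hf
    apply b.repr.injective
    apply lp.ext
    funext n
    rw [hrep, hrep, hUcoeff, hkey f hf n]
  constructor
  · intro f hf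
    have h := congrArg norm (hUT f hf)
    rw [U.norm_map] at h
    rw [Lp.norm_toLp, Lp.norm_toLp] at h
    have h1 := (hT2 f hf).2.ne
    have h2 := (hS2 f hf).2.ne
    exact ((ENNReal.toReal_eq_toReal_iff' h2 h1).mp h).symm
  · refine ⟨U, hUT, ?_⟩
    intro V hV
    have hdense : Dense {g : Lp ℂ 2 μ | ∃ f, ∃ hf : f ∈ S, (hS2 f hf).toLp f = g} := by
      rw [Metric.dense_iff]
      intro x r hr
      obtain ⟨f, hf, hlt⟩ := hSdense x r hr
      refine ⟨(hS2 f hf).toLp f, ?_, f, hf, rfl⟩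
      rw [Metric.mem_ball, dist_eq_norm, ← norm_neg]
      simpa [norm_sub_rev] using hlt
    have : (V : Lp ℂ 2 μ → Lp ℂ 2 μ) = U := by
      apply Continuous.ext_on hdense V.continuous U.continuous
      rintro g ⟨f, hf, rfl⟩
      rw [hV f hf, hUT f hf]
    exact LinearIsometryEquiv.ext fun x => congrFun this x
end

section
/- Let ν > -1. Then for every y > 0, the function x ↦ φ_ν(xy) e^{-x²/2} x^{2ν+1} is absolutely integrable on (0, ∞) and ∫_0^∞ φ_ν(xy) e^{-x²/2} x^{2ν+1} dx = e^{-y²/2}; that is, the Gaussian x ↦ e^{-x²/2} is an eigenfunction of the Fourier–Bessel transform 𝓕_ν with eigenvalue 1. -/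
open MeasureTheory Filter Set

lemma my_integrable_tsum {F : ℕ → ℝ → ℝ} {μ : Measure ℝ}
    (hm : ∀ n, AEStronglyMeasurable (F n) μ)
    (hs : ∑' n, ∫⁻ x, ‖F n x‖₊ ∂μ ≠ ⊤) :
    Integrable (fun x => ∑' n, F n x) μ := by
  have hf'' : ∀ i, AEMeasurable (fun x => (‖F i x‖₊ : ENNReal)) μ := fun i => (hm i).aemeasurable.nnnorm.coe_nnreal_ennreal
  have hs' := hs
  rw [← lintegral_tsum hf''] at hs'
  have hhh : ∀ᵐ x ∂μ, Summable fun n => (‖F n x‖₊ : ℝ) := by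
    refine (ae_lt_top' (AEMeasurable.ennreal_tsum hf'') hs').mono fun x hx => ?_
    rw [← ENNReal.tsum_coe_ne_top_iff_summable_coe]
    exact hx.ne
  constructor
  · rw [aestronglyMeasurable_iff_aemeasurable]
    refine aemeasurable_of_tendsto_metrizable_ae atTop
      (fun N => Finset.aemeasurable_sum (Finset.range N) fun n _ => (hm n).aemeasurable) ?_
    filter_upwards [hhh] with x hx
    simp only [coe_nnnorm] at hx
    simpa only [Finset.sum_apply] using hx.of_norm.hasSum.tendsto_sum_nat
  · refine lt_of_le_of_lt ?_ hs.lt_top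
    calc ∫⁻ x, ‖∑' n, F n x‖₊ ∂μ
        ≤ ∫⁻ x, ∑' n, (‖F n x‖₊ : ENNReal) ∂μ := by
          refine lintegral_mono_ae ?_
          filter_upwards [hhh] with x hx
          rw [← ENNReal.coe_tsum (NNReal.summable_coe.mp hx)]
          exact ENNReal.coe_le_coe.mpr (nnnorm_tsum_le (NNReal.summable_coe.mp hx))
      _ = ∑' n, ∫⁻ x, ‖F n x‖₊ ∂μ := lintegral_tsum hf''

lemma my_moment (ν : ℝ) (hν : ν > -1) (n : ℕ) :
    ∫ x in Ioi (0:ℝ), x ^ (2*(n:ℝ)) * Real.exp (-x^2/2) * x ^ (2*ν+1)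
      = 2 ^ ((n:ℝ)+ν) * Real.Gamma ((n:ℝ)+ν+1) := by
  have hq : (-1:ℝ) < 2*(n:ℝ) + 2*ν + 1 := by
    have : (0:ℝ) ≤ (n:ℝ) := Nat.cast_nonneg n
    linarith
  have h1 : ∀ x ∈ Ioi (0:ℝ),
      x ^ (2*(n:ℝ)) * Real.exp (-x^2/2) * x ^ (2*ν+1)
        = x ^ (2*(n:ℝ) + 2*ν + 1) * Real.exp (-(1/2) * x ^ (2:ℝ)) := by
    intro x hx
    rw [mem_Ioi] at hx
    have hsplit : x ^ (2*(n:ℝ) + 2*ν + 1) = x ^ (2*(n:ℝ)) * x ^ (2*ν+1) := by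
      rw [← Real.rpow_add hx]; ring_nf
    rw [hsplit, Real.rpow_two]
    ring_nf
  rw [setIntegral_congr_fun measurableSet_Ioi h1,
    integral_rpow_mul_exp_neg_mul_rpow two_pos hq one_half_pos]
  have h2 : (2*(n:ℝ) + 2*ν + 1 + 1)/2 = (n:ℝ)+ν+1 := by ring
  have h2' : -(2*(n:ℝ) + 2*ν + 1 + 1)/2 = -((n:ℝ)+ν+1) := by ring
  rw [h2, h2']
  have h3 : ((1:ℝ)/2) ^ (-((n:ℝ)+ν+1)) = 2 ^ ((n:ℝ)+ν+1) := by
    rw [one_div, ← Real.rpow_neg_one (2:ℝ), ← Real.rpow_mul (by norm_num)]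
    norm_num
  rw [h3, Real.rpow_add two_pos ((n:ℝ)+ν) 1, Real.rpow_one]
  ring

lemma my_int (ν : ℝ) (hν : ν > -1) (n : ℕ) :
    IntegrableOn (fun x => x ^ (2*(n:ℝ)) * Real.exp (-x^2/2) * x ^ (2*ν+1)) (Ioi (0:ℝ)) := by
  have hq : (-1:ℝ) < 2*(n:ℝ) + 2*ν + 1 := by
    have : (0:ℝ) ≤ (n:ℝ) := Nat.cast_nonneg n
    linarith
  refine (integrableOn_rpow_mul_exp_neg_mul_sq one_half_pos hq).congr_fun
    (fun x hx => ?_) measurableSet_Ioi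
  rw [mem_Ioi] at hx
  have hsplit : x ^ (2*(n:ℝ) + 2*ν + 1) = x ^ (2*(n:ℝ)) * x ^ (2*ν+1) := by
    rw [← Real.rpow_add hx]; ring_nf
  beta_reduce
  rw [hsplit]
  ring_nf

theorem stmt13 (ν : ℝ) (hν : ν > -1) :
    ∀ y > (0 : ℝ),
      IntegrableOn (fun x => fbKernel ν (x * y) * Real.exp (-x ^ 2 / 2) * x ^ (2 * ν + 1))
        (Ioi 0) ∧
      ∫ x in Ioi (0 : ℝ), fbKernel ν (x * y) * Real.exp (-x ^ 2 / 2) * x ^ (2 * ν + 1)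
        = Real.exp (-y ^ 2 / 2) := by
  intro y hy
  set c : ℕ → ℝ := fun n =>
    (-1)^n * (y^2/4)^n / ((n.factorial:ℝ) * Real.Gamma ((n:ℝ)+ν+1)) * (2:ℝ)^(-ν) with hc
  set F : ℕ → ℝ → ℝ := fun n x =>
    c n * (x ^ (2*(n:ℝ)) * Real.exp (-x^2/2) * x ^ (2*ν+1)) with hFdef
  have hGpos : ∀ n : ℕ, 0 < Real.Gamma ((n:ℝ)+ν+1) := fun n =>
    Real.Gamma_pos_of_pos (by have : (0:ℝ) ≤ (n:ℝ) := Nat.cast_nonneg n; linarith)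
  have hfac : ∀ n : ℕ, (0:ℝ) < (n.factorial : ℝ) := fun n => by
    exact_mod_cast n.factorial_pos
  have h2n : ∀ n : ℕ, (2:ℝ)^(-ν) * 2^((n:ℝ)+ν) = 2^n := by
    intro n
    rw [← Real.rpow_add two_pos, show -ν + ((n:ℝ)+ν) = ((n:ℕ):ℝ) by ring,
      Real.rpow_natCast]
  have hy24 : ∀ n : ℕ, (y^2/4:ℝ)^n * 2^n = (y^2/2)^n := by
    intro n; rw [← mul_pow]; ring_nf
  have hkey2 : ∀ (n : ℕ) (d : ℝ),
      (d * (y^2/4)^n / ((n.factorial:ℝ) * Real.Gamma ((n:ℝ)+ν+1)) * (2:ℝ)^(-ν))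
        * (2^((n:ℝ)+ν) * Real.Gamma ((n:ℝ)+ν+1))
      = d * (y^2/2)^n / (n.factorial:ℝ) := by
    intro n d
    have hG := (hGpos n).ne'
    have hf := (hfac n).ne'
    rw [show (d * (y^2/4)^n / ((n.factorial:ℝ) * Real.Gamma ((n:ℝ)+ν+1)) * (2:ℝ)^(-ν))
        * (2^((n:ℝ)+ν) * Real.Gamma ((n:ℝ)+ν+1))
      = d * ((y^2/4)^n * ((2:ℝ)^(-ν) * 2^((n:ℝ)+ν))) / (n.factorial:ℝ) from by
        field_simp, h2n n, hy24 n]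
  have hcalc : ∀ n : ℕ, c n * (2^((n:ℝ)+ν) * Real.Gamma ((n:ℝ)+ν+1))
      = (-(y^2/2))^n / n.factorial := by
    intro n
    rw [hc]
    simp only
    rw [hkey2 n ((-1)^n),
      show ((-(y^2/2):ℝ))^n = (-1)^n * (y^2/2)^n from by rw [neg_pow]]
  -- pointwise expansion of the integrand as a series
  have key : ∀ x ∈ Ioi (0:ℝ),
      fbKernel ν (x * y) * Real.exp (-x ^ 2 / 2) * x ^ (2 * ν + 1) = ∑' n, F n x := by
    intro x hx
    rw [mem_Ioi] at hx
    have hxy : 0 < x * y := mul_pos hx hy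
    rw [fbKernel, if_neg hxy.ne', besselJ]
    rw [show ((x*y) ^ (-ν) *
        ∑' n : ℕ, ((-1 : ℝ) ^ n / ((n.factorial : ℝ) * Real.Gamma ((n : ℝ) + ν + 1))) *
          (x*y / 2) ^ (2 * (n : ℝ) + ν)) * Real.exp (-x ^ 2 / 2) * x ^ (2 * ν + 1)
      = (∑' n : ℕ, ((-1 : ℝ) ^ n / ((n.factorial : ℝ) * Real.Gamma ((n : ℝ) + ν + 1))) *
          (x*y / 2) ^ (2 * (n : ℝ) + ν))
        * ((x*y) ^ (-ν) * Real.exp (-x ^ 2 / 2) * x ^ (2 * ν + 1)) from by ring,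
      ← tsum_mul_right]
    refine tsum_congr fun n => ?_
    have hdiv : ((x*y)/2) ^ (2*(n:ℝ)+ν) = (x*y) ^ (2*(n:ℝ)+ν) / 2 ^ (2*(n:ℝ)+ν) :=
      Real.div_rpow hxy.le (by norm_num) _
    have hxy2 : (x*y) ^ (2*(n:ℝ)+ν) * (x*y) ^ (-ν) = (x^2)^n * (y^2)^n := by
      rw [← Real.rpow_add hxy, show 2*(n:ℝ)+ν + -ν = ((2*n:ℕ):ℝ) by push_cast; ring,
        Real.rpow_natCast, pow_mul, mul_pow, mul_pow]
    have h2e : (2:ℝ) ^ (2*(n:ℝ)+ν) = 4^n * 2^ν := by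
      rw [Real.rpow_add two_pos, show (2:ℝ)*(n:ℝ) = ((2*n:ℕ):ℝ) by push_cast; ring,
        Real.rpow_natCast, pow_mul]
      norm_num
    have hxr : x ^ (2*(n:ℝ)) = (x^2)^n := by
      rw [show (2:ℝ)*(n:ℝ) = ((2*n:ℕ):ℝ) by push_cast; ring, Real.rpow_natCast, pow_mul]
    have h2ν : (2:ℝ)^(-ν) = ((2:ℝ)^ν)⁻¹ := Real.rpow_neg (by norm_num) ν
    have hG := (hGpos n).ne'
    have hf := (hfac n).ne'
    have h2νpos : (0:ℝ) < (2:ℝ)^ν := Real.rpow_pos_of_pos two_pos ν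
    rw [hFdef, hc]
    simp only
    rw [hdiv, h2e, hxr, h2ν]
    rw [show ((-1:ℝ)^n / ((n.factorial:ℝ) * Real.Gamma ((n:ℝ)+ν+1))) *
        ((x*y) ^ (2*(n:ℝ)+ν) / (4^n * 2^ν)) *
        ((x*y) ^ (-ν) * Real.exp (-x^2/2) * x ^ (2*ν+1))
      = ((x*y) ^ (2*(n:ℝ)+ν) * (x*y) ^ (-ν)) *
        (((-1:ℝ)^n / ((n.factorial:ℝ) * Real.Gamma ((n:ℝ)+ν+1))) *
          (Real.exp (-x^2/2) * x ^ (2*ν+1)) / (4^n * 2^ν)) from by ring,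
      hxy2]
    rw [div_pow]
    have h4 : ((4:ℝ)^n) ≠ 0 := by positivity
    field_simp
  -- measurability
  have hmeas : ∀ n, AEStronglyMeasurable (F n) (volume.restrict (Ioi (0:ℝ))) := by
    intro n
    apply Measurable.aestronglyMeasurable
    rw [hFdef]
    fun_prop
  -- integrability of each term
  have hFint : ∀ n, IntegrableOn (F n) (Ioi (0:ℝ)) := fun n =>
    (my_int ν hν n).const_mul (c n)
  -- norm integral of each term
  have hnorm : ∀ n, ∫ x in Ioi (0:ℝ), ‖F n x‖ = (y^2/2)^n / n.factorial := by
    intro n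
    have habs : |c n| = 1 * (y^2/4)^n / ((n.factorial:ℝ) * Real.Gamma ((n:ℝ)+ν+1))
        * (2:ℝ)^(-ν) := by
      have hrest : (0:ℝ) ≤ 1 * (y^2/4)^n / ((n.factorial:ℝ) * Real.Gamma ((n:ℝ)+ν+1))
          * (2:ℝ)^(-ν) :=
        mul_nonneg (div_nonneg (by positivity) (mul_nonneg (hfac n).le (hGpos n).le))
          (Real.rpow_nonneg (by norm_num) _)
      rw [hc]
      simp only
      rw [show ((-1:ℝ))^n * (y^2/4)^n / ((n.factorial:ℝ) * Real.Gamma ((n:ℝ)+ν+1))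
          * (2:ℝ)^(-ν)
        = (-1)^n * (1 * (y^2/4)^n / ((n.factorial:ℝ) * Real.Gamma ((n:ℝ)+ν+1))
          * (2:ℝ)^(-ν)) from by ring]
      rw [abs_mul, abs_pow, abs_neg, abs_one, one_pow, one_mul, abs_of_nonneg hrest]
    have h1 : ∀ x ∈ Ioi (0:ℝ),
        ‖F n x‖ = |c n| * (x ^ (2*(n:ℝ)) * Real.exp (-x^2/2) * x ^ (2*ν+1)) := by
      intro x hx
      rw [mem_Ioi] at hx
      have hpos : (0:ℝ) ≤ x ^ (2*(n:ℝ)) * Real.exp (-x^2/2) * x ^ (2*ν+1) :=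
        mul_nonneg (mul_nonneg (Real.rpow_nonneg hx.le _) (Real.exp_pos _).le)
          (Real.rpow_nonneg hx.le _)
      rw [hFdef]
      simp only [Real.norm_eq_abs, abs_mul, abs_of_nonneg hpos]
    rw [setIntegral_congr_fun measurableSet_Ioi h1, integral_const_mul _ _, my_moment ν hν n,
      habs, hkey2 n 1, one_mul]
  -- lintegral of each term
  have hlint : ∀ n, ∫⁻ x in Ioi (0:ℝ), ‖F n x‖₊
      = ENNReal.ofReal ((y^2/2)^n / n.factorial) := by
    intro n
    have hco : Integrable (fun x => (‖F n x‖₊ : ℝ)) (volume.restrict (Ioi 0)) := by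
      simpa [coe_nnnorm] using (hFint n).norm
    rw [lintegral_coe_eq_integral _ hco, ← hnorm n]
    congr 1
  have hsum : Summable (fun n => (y^2/2)^n / (n.factorial:ℝ)) :=
    Real.summable_pow_div_factorial _
  have hne : ∑' n, ∫⁻ x in Ioi (0:ℝ), ‖F n x‖₊ ≠ ⊤ := by
    rw [tsum_congr hlint, ← ENNReal.ofReal_tsum_of_nonneg (fun n => by positivity) hsum]
    exact ENNReal.ofReal_ne_top
  constructor
  · refine (my_integrable_tsum hmeas hne).congr ?_
    filter_upwards [ae_restrict_mem measurableSet_Ioi] with x hx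
    exact (key x hx).symm
  · rw [setIntegral_congr_fun measurableSet_Ioi key, MeasureTheory.integral_tsum hmeas hne]
    have hterm : ∀ n, ∫ x in Ioi (0:ℝ), F n x = (-(y^2/2))^n / n.factorial := by
      intro n
      rw [hFdef]
      simp only
      rw [integral_const_mul _ _, my_moment ν hν n]
      exact hcalc n
    rw [tsum_congr hterm, show (-y^2/2:ℝ) = -(y^2/2) by ring, Real.exp_eq_exp_ℝ,
      NormedSpace.exp_eq_tsum_div]
end

section
/- Let ν ∈ ℝ and let g : ℝ → ℂ be an even Schwartz function. Then there exist even Schwartz functions h₁, h₂ : ℝ → ℂ such that h₁(x) = x² g(x) for all x ∈ ℝ and h₂(x) = g''(x) + ((2ν+1)/x) g'(x) for all x ≠ 0. In particular, the half-line Schwartz space 𝒮⁺((0, ∞)) = { g|_{(0,∞)} : g ∈ 𝒮(ℝ), g even } is invariant under multiplication by x² and under the Bessel operator Δ_ν. -/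
open MeasureTheory Filter Set


-- iterated derivatives of x ↦ (x:ℂ)⁻¹
lemma inv_iteratedDeriv (j : ℕ) :
    ∃ c : ℂ, ‖c‖ = j.factorial ∧ ∀ x : ℝ, x ≠ 0 →
      iteratedDeriv j (fun y : ℝ => ((y : ℂ))⁻¹) x = c * ((x : ℂ)) ^ (-(j + 1) : ℤ) := by
  induction j with
  | zero =>
      refine ⟨1, by simp, fun x hx => ?_⟩
      simp [iteratedDeriv_zero, zpow_neg_one]
  | succ j ih =>
      obtain ⟨c, hc, hformula⟩ := ih
      refine ⟨c * (-(j + 1) : ℂ), ?_, fun x hx => ?_⟩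
      · rw [norm_mul, hc]
        have : ‖(-(j + 1) : ℂ)‖ = (j + 1 : ℝ) := by
          rw [norm_neg]
          norm_cast
        rw [this]
        push_cast [Nat.factorial_succ]
        ring
      · rw [iteratedDeriv_succ]
        have hev : (fun y : ℝ => c * ((y : ℂ)) ^ (-(j + 1) : ℤ)) =ᶠ[nhds x]
            iteratedDeriv j (fun y : ℝ => ((y : ℂ))⁻¹) := by
          filter_upwards [isOpen_ne.mem_nhds hx] with y hy
          exact (hformula y hy).symm
        rw [← hev.deriv_eq]
        have hz : ((x : ℂ)) ≠ 0 := Complex.ofReal_ne_zero.mpr hx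
        have hd : HasDerivAt (fun y : ℝ => c * ((y : ℂ)) ^ (-(j + 1) : ℤ))
            (c * ((-(j + 1) : ℤ) * (x : ℂ) ^ ((-(j + 1) : ℤ) - 1))) x := by
          exact ((hasDerivAt_zpow (-(j + 1) : ℤ) (x : ℂ) (Or.inl hz)).const_mul c).comp_ofReal
        rw [hd.deriv]
        have : ((-(j + 1) : ℤ) - 1) = (-(j + 1 + 1) : ℤ) := by ring
        rw [this]
        push_cast
        ring


lemma aux_deriv_w2 : deriv (fun x : ℝ => ((x : ℂ)) ^ 2) = fun x : ℝ => 2 * (x : ℂ) := by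
  funext x
  simpa using ((hasDerivAt_pow 2 ((x : ℂ))).comp_ofReal).deriv

lemma aux_deriv_w1 : deriv (fun x : ℝ => 2 * (x : ℂ)) = fun _ : ℝ => (2 : ℂ) := by
  funext x
  have : HasDerivAt (fun x : ℝ => 2 * (x : ℂ)) (2 * 1) x :=
    ((hasDerivAt_id ((x : ℂ))).const_mul 2).comp_ofReal
  simpa using this.deriv

lemma ofReal_sq_temperate : Function.HasTemperateGrowth (fun x : ℝ => ((x : ℂ)) ^ 2) := by
  constructor
  · exact Complex.ofRealCLM.contDiff.pow 2
  · intro n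
    refine ⟨2, 2, fun x => ?_⟩
    rw [norm_iteratedFDeriv_eq_norm_iteratedDeriv]
    have hb : (0:ℝ) ≤ 1 + ‖x‖ := by positivity
    match n with
    | 0 =>
        rw [iteratedDeriv_zero]
        have : ‖((x:ℂ))^2‖ ≤ (1 + ‖x‖)^2 := by
          rw [norm_pow, Complex.norm_real]
          gcongr
          linarith [norm_nonneg x]
        nlinarith [pow_nonneg hb 2]
    | 1 =>
        rw [iteratedDeriv_one, aux_deriv_w2]
        rw [norm_mul, Complex.norm_real]
        have h2 : ‖(2:ℂ)‖ = 2 := by norm_num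
        rw [h2]
        nlinarith [norm_nonneg x, sq_nonneg ‖x‖]
    | 2 =>
        rw [show (2:ℕ) = 1 + 1 from rfl, iteratedDeriv_succ', aux_deriv_w2, iteratedDeriv_one,
          aux_deriv_w1]
        have h2 : ‖(2:ℂ)‖ = 2 := by norm_num
        rw [h2]
        have h3 : (1:ℝ) ≤ (1 + ‖x‖) ^ (1+1) := one_le_pow₀ (by linarith [norm_nonneg x])
        linarith
    | (m+3) =>
        rw [show m + 3 = (m + 2) + 1 from rfl, iteratedDeriv_succ', aux_deriv_w2,
          show m + 2 = (m + 1) + 1 from rfl, iteratedDeriv_succ', aux_deriv_w1]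
        rw [← norm_iteratedFDeriv_eq_norm_iteratedDeriv,
          iteratedFDeriv_const_of_ne (Nat.succ_ne_zero m)]
        simp
        positivity

lemma deriv_even_of_odd {f : ℝ → ℂ} (hf : ∀ x, f (-x) = -f x) (x : ℝ) :
    deriv f (-x) = deriv f x := by
  have h : (fun y : ℝ => f (-y)) = fun y => -f y := funext hf
  have h2 := deriv_comp_neg (f := f) (x := x)
  rw [h, show (fun y => -f y) = -f from rfl, deriv.neg] at h2
  exact (neg_injective h2).symm

lemma deriv_odd_of_even {f : ℝ → ℂ} (hf : ∀ x, f (-x) = f x) (x : ℝ) :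
    deriv f (-x) = -deriv f x := by
  have h : (fun y : ℝ => f (-y)) = f := funext hf
  have h2 := deriv_comp_neg (f := f) (x := x)
  rw [h] at h2
  rw [h2, neg_neg]



lemma odd_schwartz_div (f : SchwartzMap ℝ ℂ) (hodd : ∀ x, f (-x) = -f x) :
    ∃ q : SchwartzMap ℝ ℂ, (∀ x, q (-x) = q x) ∧
      ∀ x : ℝ, x ≠ 0 → q x = (x⁻¹ : ℝ) • f x := by
  classical
  set D : ℕ → ℝ → ℂ := fun m => iteratedDeriv m (⇑f) with hD
  have hD_cd : ∀ m, ContDiff ℝ (⊤ : ℕ∞) (D m) := by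
    intro m
    simp only [hD, iteratedDeriv_eq_iterate]
    exact ContDiff.iterate_deriv m f.smooth'
  have hD_deriv : ∀ (m : ℕ) (x : ℝ), HasDerivAt (D m) (D (m + 1) x) x := by
    intro m x
    have h1 : Differentiable ℝ (D m) := (hD_cd m).differentiable (by simp)
    have h2 := (h1 x).hasDerivAt
    have h3 : D (m + 1) x = deriv (D m) x := by
      simp only [hD]; rw [iteratedDeriv_succ]
    rw [h3]
    exact h2
  have hD_bd : ∀ m, ∃ C, 0 < C ∧ ∀ x, ‖D m x‖ ≤ C := by
    intro m
    obtain ⟨C, hC, h⟩ := f.decay 0 m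
    refine ⟨C, hC, fun x => ?_⟩
    have := h x
    simpa [norm_iteratedFDeriv_eq_norm_iteratedDeriv] using this
  set Q : ℕ → ℝ → ℂ := fun n x => ∫ t in (0:ℝ)..1, t ^ n • D (n + 1) (t * x) with hQ
  have hcont : ∀ (n : ℕ) (x : ℝ), Continuous fun t : ℝ => t ^ n • D (n + 1) (t * x) := by
    intro n x
    exact (continuous_pow n).smul
      ((hD_cd (n + 1)).continuous.comp (continuous_id.mul continuous_const))
  have hQderiv : ∀ (n : ℕ) (x₀ : ℝ), HasDerivAt (Q n) (Q (n + 1) x₀) x₀ := by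
    intro n x₀
    obtain ⟨C, hCpos, hC⟩ := hD_bd (n + 2)
    have key := intervalIntegral.hasDerivAt_integral_of_dominated_loc_of_deriv_le
      (F := fun (x : ℝ) (t : ℝ) => t ^ n • D (n + 1) (t * x))
      (F' := fun (x : ℝ) (t : ℝ) => t ^ (n + 1) • D (n + 2) (t * x))
      (x₀ := x₀) (s := Metric.ball x₀ 1) (a := 0) (b := 1) (μ := volume) (bound := fun _ => C)
      (Metric.ball_mem_nhds x₀ one_pos)
      (Eventually.of_forall fun x => (hcont n x).aestronglyMeasurable)
      ((hcont n x₀).intervalIntegrable 0 1)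
      (((continuous_pow (n + 1)).smul
        ((hD_cd (n + 2)).continuous.comp (continuous_id.mul continuous_const))).aestronglyMeasurable)
      (Eventually.of_forall fun t ht x hx => by
        rw [norm_smul]
        have ht' : t ∈ Set.Ioc (0:ℝ) 1 := by
          rwa [Set.uIoc_of_le (zero_le_one)] at ht
        have h1 : ‖t ^ (n + 1)‖ ≤ 1 := by
          rw [Real.norm_eq_abs, abs_pow]
          exact pow_le_one₀ (abs_nonneg t) (abs_le.mpr ⟨by linarith [ht'.1], ht'.2⟩)
        calc ‖t ^ (n+1)‖ * ‖D (n + 2) (t * x)‖ ≤ 1 * C :=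
              mul_le_mul h1 (hC _) (norm_nonneg _) one_pos.le
          _ = C := one_mul C)
      (intervalIntegrable_const)
      (Eventually.of_forall fun t ht x hx => by
        have h2 : HasDerivAt (fun y : ℝ => t * y) t x := by
          simpa using (hasDerivAt_id x).const_mul t
        have h3 := (hD_deriv (n + 1) (t * x)).scomp x h2
        have h4 : HasDerivAt (fun y => t ^ n • D (n + 1) (t * y))
            (t ^ n • t • D (n + 1 + 1) (t * x)) x := h3.const_smul (t ^ n)
        have h6 : t ^ (n + 1) • D (n + 2) (t * x) = t ^ n • t • D (n + 1 + 1) (t * x) := by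
          rw [pow_succ, mul_smul]
        show HasDerivAt (fun y => t ^ n • D (n + 1) (t * y)) (t ^ (n + 1) • D (n + 2) (t * x)) x
        rw [h6]
        exact h4)
    exact key.2
  have hQ_eq_iter : ∀ n, iteratedDeriv n (Q 0) = Q n := by
    intro n
    induction n with
    | zero => simp [iteratedDeriv_zero]
    | succ n ih =>
        rw [iteratedDeriv_succ, ih]
        funext x
        exact (hQderiv n x).deriv
  have hQderiv_eq : ∀ n, deriv (Q n) = Q (n + 1) :=
    fun n => funext fun x => (hQderiv n x).deriv
  have hQ_cdN : ∀ (m : ℕ) (n : ℕ), ContDiff ℝ (m : ℕ) (Q n) := by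
    intro m
    induction m with
    | zero =>
        intro n
        simp only [Nat.cast_zero, contDiff_zero]
        have hdiff : Differentiable ℝ (Q n) := fun x => (hQderiv n x).differentiableAt
        exact hdiff.continuous
    | succ m ih =>
        intro n
        have : ((m + 1 : ℕ) : WithTop ℕ∞) = (m : ℕ) + 1 := by push_cast; rfl
        rw [this, contDiff_succ_iff_deriv]
        refine ⟨fun x => (hQderiv n x).differentiableAt, by simp, ?_⟩
        rw [hQderiv_eq n]
        exact ih (n + 1)
  have hQ_smooth : ∀ n, ContDiff ℝ ((⊤ : ℕ∞) : WithTop ℕ∞) (Q n) := by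
    intro n
    exact contDiff_infty.mpr (fun m => hQ_cdN m n)
  -- f vanishes at 0
  have hf0 : f 0 = 0 := by
    have h := hodd 0
    rw [neg_zero] at h
    linear_combination h / 2

  -- fundamental formula
  have hkey : ∀ x : ℝ, x • Q 0 x = f x := by
    intro x
    have h1 : ∀ t ∈ Set.uIcc (0:ℝ) 1, HasDerivAt (fun s : ℝ => f (s * x)) (x • D 1 (t * x)) t := by
      intro t ht
      have h2 : HasDerivAt (fun s : ℝ => s * x) x t := by
        simpa using (hasDerivAt_id t).mul_const x
      have h3 := (hD_deriv 0 (t * x)).scomp t h2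
      simpa [hD, iteratedDeriv_zero, Function.comp_def] using h3
    have hcont1 : Continuous fun t : ℝ => x • D 1 (t * x) :=
      ((hD_cd 1).continuous.comp (continuous_mul_const x)).const_smul x
    have h2 := intervalIntegral.integral_eq_sub_of_hasDerivAt h1 (hcont1.intervalIntegrable 0 1)
    rw [intervalIntegral.integral_smul] at h2
    simp only [one_mul, zero_mul, hf0, sub_zero] at h2
    calc x • Q 0 x = x • ∫ t in (0:ℝ)..1, D 1 (t * x) := by
          simp only [hQ, pow_zero, one_smul, zero_add]
      _ = f x := h2
  have hformula : ∀ x : ℝ, x ≠ 0 → Q 0 x = (x⁻¹ : ℝ) • f x := by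
    intro x hx
    rw [← hkey x, smul_smul, inv_mul_cancel₀ hx, one_smul]
  -- evenness
  have heven : ∀ x : ℝ, Q 0 (-x) = Q 0 x := by
    intro x
    have hD1even : ∀ y : ℝ, D 1 (-y) = D 1 y := by
      intro y
      simp only [hD, iteratedDeriv_one]
      exact deriv_even_of_odd hodd y
    simp only [hQ, pow_zero, one_smul, zero_add]
    refine intervalIntegral.integral_congr fun t ht => ?_
    rw [mul_neg, hD1even]
  -- decay
  have hdecay : ∀ k n : ℕ, ∃ C : ℝ, ∀ x, ‖x‖ ^ k * ‖iteratedFDeriv ℝ n (Q 0) x‖ ≤ C := by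
    intro k n
    obtain ⟨C₁, hC₁pos, hC₁⟩ := hD_bd (n + 1)
    choose C₂ hC₂pos hC₂ using fun i => f.decay k i
    set B : ℝ := ∑ i ∈ Finset.range (n + 1),
      (n.choose i : ℝ) * C₂ i * ((n - i).factorial : ℝ) with hB
    refine ⟨max C₁ B, fun x => ?_⟩
    rcases le_or_gt ‖x‖ 1 with hx | hx
    · -- small x
      have h1 : ‖iteratedFDeriv ℝ n (Q 0) x‖ = ‖Q n x‖ := by
        rw [norm_iteratedFDeriv_eq_norm_iteratedDeriv, hQ_eq_iter n]
      have h2 : ‖Q n x‖ ≤ C₁ := by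
        have h3 : ∀ t ∈ Set.uIoc (0:ℝ) 1, ‖t ^ n • D (n + 1) (t * x)‖ ≤ C₁ := by
          intro t ht
          have ht' : t ∈ Set.Ioc (0:ℝ) 1 := by rwa [Set.uIoc_of_le zero_le_one] at ht
          rw [norm_smul]
          have h4 : ‖t ^ n‖ ≤ 1 := by
            rw [Real.norm_eq_abs, abs_pow]
            exact pow_le_one₀ (abs_nonneg t) (abs_le.mpr ⟨by linarith [ht'.1], ht'.2⟩)
          calc ‖t ^ n‖ * ‖D (n + 1) (t * x)‖ ≤ 1 * C₁ :=
                mul_le_mul h4 (hC₁ _) (norm_nonneg _) one_pos.le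
            _ = C₁ := one_mul C₁
        have h2' := intervalIntegral.norm_integral_le_of_norm_le_const h3
        rw [sub_zero, abs_one, mul_one] at h2'
        exact h2'
      have h5 : ‖x‖ ^ k ≤ 1 := pow_le_one₀ (norm_nonneg x) hx
      calc ‖x‖ ^ k * ‖iteratedFDeriv ℝ n (Q 0) x‖ ≤ 1 * C₁ := by
            rw [h1]; exact mul_le_mul h5 h2 (norm_nonneg _) one_pos.le
        _ = C₁ := one_mul C₁
        _ ≤ max C₁ B := le_max_left _ _
    · -- large x
      set s : Set ℝ := {y : ℝ | (1:ℝ)/2 < |y|} with hs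
      have hs_open : IsOpen s := isOpen_lt continuous_const continuous_abs
      have hxs : x ∈ s := by
        simp only [hs, Set.mem_setOf_eq]
        rw [Real.norm_eq_abs] at hx
        linarith
      have hsne : ∀ y ∈ s, y ≠ 0 := by
        intro y hy h0
        rw [h0] at hy
        simp only [hs, Set.mem_setOf_eq, abs_zero] at hy
        linarith
      set w : ℝ → ℂ := fun y => ((y : ℂ))⁻¹ with hw
      have heqon : Set.EqOn (Q 0) (fun y => f y * w y) s := by
        intro y hy
        rw [hformula y (hsne y hy)]
        simp only [hw]
        rw [Complex.real_smul, Complex.ofReal_inv]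
        ring
      have hwcd : ContDiffOn ℝ ((n : ℕ) : WithTop ℕ∞) w s := by
        refine ContDiffOn.inv ?_ (fun y hy => Complex.ofReal_ne_zero.mpr (hsne y hy))
        exact Complex.ofRealCLM.contDiff.contDiffOn
      have hfcd : ContDiffOn ℝ ((n : ℕ) : WithTop ℕ∞) (⇑f) s := (f.smooth n).contDiffOn
      have hmul := norm_iteratedFDerivWithin_mul_le (𝕜 := ℝ) (A := ℂ)
        hfcd hwcd hs_open.uniqueDiffOn hxs (le_refl ((n : ℕ) : WithTop ℕ∞))
      have hglobal : iteratedFDeriv ℝ n (Q 0) x = iteratedFDerivWithin ℝ n (fun y => f y * w y) s x := by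
        rw [← iteratedFDerivWithin_of_isOpen n hs_open hxs]
        exact iteratedFDerivWithin_congr heqon hxs n
      -- bound each w term
      have hwterm : ∀ j : ℕ, ‖iteratedFDerivWithin ℝ j w s x‖ ≤ (j.factorial : ℝ) := by
        intro j
        rw [iteratedFDerivWithin_of_isOpen j hs_open hxs,
          norm_iteratedFDeriv_eq_norm_iteratedDeriv]
        obtain ⟨c, hc, hcf⟩ := inv_iteratedDeriv j
        rw [hcf x (hsne x hxs), norm_mul, hc, norm_zpow, Complex.norm_real, Real.norm_eq_abs]
        have habs : (1:ℝ) ≤ |x| := by rw [Real.norm_eq_abs] at hx; linarith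
        have h6 : |x| ^ (-(j + 1) : ℤ) ≤ 1 :=
          zpow_le_one_of_nonpos₀ habs (by omega)
        have hfac : (0:ℝ) < (j.factorial : ℝ) := by exact_mod_cast Nat.factorial_pos j
        nlinarith [h6, zpow_pos (lt_of_lt_of_le one_pos habs) (-(j + 1) : ℤ)]
      have hfterm : ∀ i : ℕ, ‖iteratedFDerivWithin ℝ i (⇑f) s x‖ = ‖iteratedFDeriv ℝ i (⇑f) x‖ := by
        intro i
        rw [iteratedFDerivWithin_of_isOpen i hs_open hxs]
      calc ‖x‖ ^ k * ‖iteratedFDeriv ℝ n (Q 0) x‖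
          ≤ ‖x‖ ^ k * ∑ i ∈ Finset.range (n + 1), (n.choose i : ℝ) *
              ‖iteratedFDerivWithin ℝ i (⇑f) s x‖ * ‖iteratedFDerivWithin ℝ (n - i) w s x‖ := by
            rw [hglobal]
            exact mul_le_mul_of_nonneg_left hmul (by positivity)
        _ = ∑ i ∈ Finset.range (n + 1), (n.choose i : ℝ) *
              (‖x‖ ^ k * ‖iteratedFDeriv ℝ i (⇑f) x‖) * ‖iteratedFDerivWithin ℝ (n - i) w s x‖ := by
            rw [Finset.mul_sum]
            refine Finset.sum_congr rfl fun i _ => ?_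
            rw [hfterm i]
            ring
        _ ≤ B := by
            rw [hB]
            refine Finset.sum_le_sum fun i _ => ?_
            have h8 := hC₂ i x
            have h9 := hwterm (n - i)
            have h11 : (0:ℝ) ≤ (n.choose i : ℝ) := by positivity
            exact mul_le_mul (mul_le_mul_of_nonneg_left h8 h11) h9 (norm_nonneg _)
              (mul_nonneg h11 (hC₂pos i).le)
        _ ≤ max C₁ B := le_max_right _ _
  refine ⟨⟨Q 0, hQ_smooth 0, hdecay⟩, heven, hformula⟩


theorem stmt18 (ν : ℝ) (g : SchwartzMap ℝ ℂ) (hg : ∀ x, g (-x) = g x) :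
    ∃ h₁ h₂ : SchwartzMap ℝ ℂ,
      (∀ x, h₁ (-x) = h₁ x) ∧ (∀ x : ℝ, h₁ x = (x ^ 2 : ℝ) • g x) ∧
      (∀ x, h₂ (-x) = h₂ x) ∧
      (∀ x : ℝ, x ≠ 0 →
        h₂ x = deriv (deriv (g : ℝ → ℂ)) x + ((2 * ν + 1) / x : ℝ) • deriv (g : ℝ → ℂ) x) := by
  classical
  set h₁ : SchwartzMap ℝ ℂ :=
    SchwartzMap.bilinLeftCLM (ContinuousLinearMap.mul ℝ ℂ) ofReal_sq_temperate g with hh₁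
  have hh₁app : ∀ x : ℝ, h₁ x = g x * ((x : ℂ)) ^ 2 := fun x => rfl
  set f : SchwartzMap ℝ ℂ := SchwartzMap.derivCLM ℝ ℂ g with hf
  have hfapp : ∀ x : ℝ, f x = deriv (⇑g) x := fun x => rfl
  have hfeq : ⇑f = deriv (⇑g) := funext hfapp
  have hfodd : ∀ x, f (-x) = -f x := by
    intro x
    rw [hfapp, hfapp]
    exact deriv_odd_of_even hg x
  obtain ⟨q, hqeven, hqformula⟩ := odd_schwartz_div f hfodd
  refine ⟨h₁, SchwartzMap.derivCLM ℝ ℂ f + (2 * ν + 1) • q, ?_, ?_, ?_, ?_⟩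
  · intro x
    rw [hh₁app, hh₁app, hg x]
    push_cast
    ring
  · intro x
    rw [hh₁app, Complex.real_smul]
    push_cast
    ring
  · intro x
    simp only [SchwartzMap.add_apply, SchwartzMap.smul_apply, SchwartzMap.derivCLM_apply]
    rw [deriv_even_of_odd hfodd x, hqeven x]
  · intro x hx
    simp only [SchwartzMap.add_apply, SchwartzMap.smul_apply, SchwartzMap.derivCLM_apply]
    rw [hfeq, hqformula x hx, ← hfapp]
    congr 1
    rw [smul_smul, div_eq_mul_inv]
end
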